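/- arXiv:2603.21037 — 7 statements merged into one kernel-verified Lean document; each statement's English description precedes it below -/
import Mathlib

section
/- For every D > 0 there exists a constant C ≥ 1 with the following property: for every matrix A ∈ SL(2,ℝ) with |tr A| ≥ 2 (i.e. A is not elliptic, so the Möbius transformation it induces is hyperbolic or parabolic or the identity) and for all points z, w in the upper half-plane ℍ with d_ℍ(z, w) ≤ D, one has d_ℍ(w, A·w) ≤ C · d_ℍ(z, A·z). -/
open UpperHalfPlane Matrix
open scoped MatrixGroups

section Aux
open Real

lemma SL2_det (A : SL(2,ℝ)) : A 0 0 * A 1 1 - A 0 1 * A 1 0 = 1 := by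
  have := A.prop
  rwa [Matrix.det_fin_two] at this

lemma SL2_coe_smul (A : SL(2,ℝ)) (z : ℍ) :
    ((A • z : ℍ) : ℂ) = ((A 0 0 : ℝ) * (z:ℂ) + (A 0 1 : ℝ)) / ((A 1 0 : ℝ) * (z:ℂ) + (A 1 1 : ℝ)) := by
  rw [UpperHalfPlane.specialLinearGroup_apply]
  simp

lemma SL2_denom_ne (A : SL(2,ℝ)) (z : ℍ) :
    ((A 1 0 : ℝ) : ℂ) * (z:ℂ) + ((A 1 1 : ℝ) : ℂ) ≠ 0 := by
  intro h
  rcases eq_or_ne (A 1 0) 0 with hc | hc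
  · have hd : A 1 1 ≠ 0 := by
      intro hd
      have := SL2_det A
      rw [hc, hd] at this; simp at this
    rw [hc] at h; simp at h
    exact hd (by exact_mod_cast h)
  · have him : (((A 1 0 : ℝ) : ℂ) * (z:ℂ) + ((A 1 1 : ℝ) : ℂ)).im = A 1 0 * z.im := by
      simp [Complex.add_im, Complex.mul_im]
    rw [h] at him
    simp at him
    rcases him with h1 | h2
    · exact hc h1
    · exact (z.im_pos.ne') h2

lemma SL2_im_smul (A : SL(2,ℝ)) (z : ℍ) :
    (A • z : ℍ).im = z.im / Complex.normSq (((A 1 0 : ℝ) : ℂ) * (z:ℂ) + ((A 1 1 : ℝ) : ℂ)) := by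
  have h := SL2_coe_smul A z
  have h2 : (A • z : ℍ).im = (((A 0 0 : ℝ) * (z:ℂ) + (A 0 1 : ℝ)) / ((A 1 0 : ℝ) * (z:ℂ) + (A 1 1 : ℝ))).im := by
    rw [← h]; rfl
  have hdet := SL2_det A
  rw [h2, Complex.div_im]
  have hnum : (((A 0 0 : ℝ) : ℂ) * (z:ℂ) + (A 0 1 : ℝ)).im * (((A 1 0 : ℝ) : ℂ) * (z:ℂ) + (A 1 1 : ℝ)).re
      - (((A 0 0 : ℝ) : ℂ) * (z:ℂ) + (A 0 1 : ℝ)).re * (((A 1 0 : ℝ) : ℂ) * (z:ℂ) + (A 1 1 : ℝ)).im = z.im := by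
    simp only [Complex.add_im, Complex.add_re, Complex.mul_im, Complex.mul_re,
      Complex.ofReal_re, Complex.ofReal_im, UpperHalfPlane.coe_im, UpperHalfPlane.coe_re]
    linear_combination z.im * hdet
  rw [div_sub_div_same, hnum]

/-- The displacement polynomial value. -/
noncomputable def dispF (A : SL(2,ℝ)) (z : ℍ) : ℝ :=
  ‖(A 1 0 : ℝ) * (z:ℂ)^2 + ((A 1 1 : ℝ) - (A 0 0 : ℝ)) * (z:ℂ) - (A 0 1 : ℝ)‖ / (2 * z.im)

lemma dist_self_smul (A : SL(2,ℝ)) (z : ℍ) :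
    dist z (A • z) = 2 * arsinh (dispF A z) := by
  rw [UpperHalfPlane.dist_eq]
  congr 1
  congr 1
  set a : ℝ := A 0 0; set b : ℝ := A 0 1; set c : ℝ := A 1 0; set d : ℝ := A 1 1
  set δ : ℂ := (c : ℂ) * (z:ℂ) + (d : ℂ) with hδ
  have hδne : δ ≠ 0 := SL2_denom_ne A z
  have hN : Complex.normSq δ > 0 := Complex.normSq_pos.2 hδne
  have him : (A • z : ℍ).im = z.im / Complex.normSq δ := SL2_im_smul A z
  have hy : (0:ℝ) < z.im := z.im_pos
  -- numerator
  have hd1 : dist (z:ℂ) ((A • z : ℍ) : ℂ)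
      = ‖(c:ℂ) * (z:ℂ)^2 + ((d:ℂ) - (a:ℂ)) * (z:ℂ) - (b:ℂ)‖ / ‖δ‖ := by
    rw [Complex.dist_eq, SL2_coe_smul A z, ← norm_div]
    congr 1
    have h1 := SL2_denom_ne A z
    have h2 : (z:ℂ) * ((A 1 0 : ℝ):ℂ) + ((A 1 1 : ℝ):ℂ) ≠ 0 := by rw [mul_comm]; exact h1
    field_simp
    ring
  -- denominator
  have hd2 : √(z.im * (A • z : ℍ).im) = z.im / ‖δ‖ := by
    rw [him]
    rw [show z.im * (z.im / Complex.normSq δ) = (z.im / ‖δ‖)^2 by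
      rw [div_pow, Complex.sq_norm]; ring]
    exact Real.sqrt_sq (by positivity)
  rw [hd1, hd2, dispF]
  have habs : ‖δ‖ > 0 := norm_pos_iff.2 hδne
  field_simp
  show _ = ‖(z:ℂ) * ((z:ℂ) * (c:ℂ) + ((d:ℂ) - (a:ℂ))) - (b:ℂ)‖
  congr 1; ring

noncomputable def invMat (r : ℝ) : SL(2,ℝ) :=
  ⟨!![0,-1;1,-r], by simp [Matrix.det_fin_two_of]⟩

lemma invMat_im (r : ℝ) (z : ℍ) :
    ((invMat r) • z : ℍ).im = z.im / Complex.normSq ((z:ℂ) - (r:ℂ)) := by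
  have h := SL2_im_smul (invMat r) z
  have h10 : (invMat r) 1 0 = 1 := rfl
  have h11 : (invMat r) 1 1 = -r := rfl
  rw [h10, h11] at h
  simpa [sub_eq_add_neg] using h

lemma busemann (r : ℝ) (z w : ℍ) :
    Complex.normSq ((w:ℂ) - (r:ℂ)) / w.im
      ≤ Real.exp (dist z w) * (Complex.normSq ((z:ℂ) - (r:ℂ)) / z.im) := by
  have hz : (0:ℝ) < Complex.normSq ((z:ℂ) - (r:ℂ)) := by
    rw [Complex.normSq_pos]
    intro h
    have := congrArg Complex.im h
    simp [UpperHalfPlane.coe_im] at this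
    exact z.im_pos.ne' this
  have hw : (0:ℝ) < Complex.normSq ((w:ℂ) - (r:ℂ)) := by
    rw [Complex.normSq_pos]
    intro h
    have := congrArg Complex.im h
    simp [UpperHalfPlane.coe_im] at this
    exact w.im_pos.ne' this
  have key : ((invMat r) • z : ℍ).im ≤ ((invMat r) • w : ℍ).im * Real.exp (dist z w) := by
    have := UpperHalfPlane.im_le_im_mul_exp_dist ((invMat r) • z) ((invMat r) • w)
    rwa [dist_smul] at this
  rw [invMat_im, invMat_im] at key
  have hzim := z.im_pos
  have hwim := w.im_pos
  field_simp [hz.ne', hw.ne'] at key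
  rw [← mul_div_assoc, div_le_div_iff₀ hwim hzim]
  nlinarith [key]

lemma sinh_convexOn : ConvexOn ℝ (Set.Ici (0:ℝ)) Real.sinh := by
  apply convexOn_of_deriv2_nonneg (convex_Ici 0)
  · exact Real.continuous_sinh.continuousOn
  · exact Real.differentiable_sinh.differentiableOn
  · rw [Real.deriv_sinh]
    exact Real.differentiable_cosh.differentiableOn
  · intro x hx
    rw [interior_Ici] at hx
    simp only [Function.iterate_succ, Function.iterate_zero, Function.comp_apply, id_eq]
    rw [show deriv (deriv Real.sinh) = deriv Real.cosh by rw [Real.deriv_sinh],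
      Real.deriv_cosh]
    exact (Real.sinh_pos_iff.2 hx).le

lemma mul_sinh_le (K t : ℝ) (hK : 1 ≤ K) (ht : 0 ≤ t) : K * Real.sinh t ≤ Real.sinh (K * t) := by
  have hK0 : 0 < K := lt_of_lt_of_le one_pos hK
  have h1K : (0:ℝ) ≤ 1/K := by positivity
  have h1K' : (0:ℝ) ≤ 1 - 1/K := by
    have : 1/K ≤ 1 := by rw [div_le_one hK0]; exact hK
    linarith
  have h := sinh_convexOn.2 (Set.mem_Ici.2 (mul_nonneg hK0.le ht))
    (Set.mem_Ici.2 (le_refl (0:ℝ))) h1K h1K' (by ring)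
  simp only [smul_eq_mul, mul_zero, Real.sinh_zero, add_zero] at h
  have ht' : (1/K) * (K * t) = t := by field_simp
  rw [ht'] at h
  calc K * Real.sinh t ≤ K * (1/K * Real.sinh (K*t)) := by
        apply mul_le_mul_of_nonneg_left h hK0.le
    _ = Real.sinh (K * t) := by field_simp

lemma inv_im_le (z w : ℍ) : 1 / w.im ≤ Real.exp (dist z w) * (1 / z.im) := by
  have h := UpperHalfPlane.im_le_im_mul_exp_dist z w
  have hz := z.im_pos
  have hw := w.im_pos
  rw [div_le_iff₀ hw, show Real.exp (dist z w) * (1/z.im) * w.im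
    = (w.im * Real.exp (dist z w)) / z.im from by ring, le_div_iff₀ hz]
  linarith

set_option maxHeartbeats 800000 in
lemma dispF_le (A : SL(2,ℝ)) (htr : 2 ≤ |A 0 0 + A 1 1|) (z w : ℍ) :
    dispF A w ≤ Real.exp (dist z w) * dispF A z := by
  set a : ℝ := A 0 0 with ha
  set b : ℝ := A 0 1 with hb
  set c : ℝ := A 1 0 with hc'
  set d : ℝ := A 1 1 with hd'
  have hdet : a * d - b * c = 1 := SL2_det A
  have hyz := z.im_pos
  have hyw := w.im_pos
  set e : ℝ := Real.exp (dist z w) with he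
  have he0 : 0 < e := Real.exp_pos _
  have hdisc : (0:ℝ) ≤ (d - a)^2 + 4*b*c := by
    have h4 : (2:ℝ)^2 ≤ |a + d|^2 := by
      apply pow_le_pow_left₀ (by norm_num) htr
    rw [sq_abs] at h4
    nlinarith
  have hw0 : 0 ≤ dispF A w := by unfold dispF; positivity
  have hz0 : 0 ≤ e * dispF A z := by
    have : 0 ≤ dispF A z := by unfold dispF; positivity
    positivity
  suffices hsq : (dispF A w)^2 ≤ (e * dispF A z)^2 by
    rw [← Real.sqrt_sq hw0, ← Real.sqrt_sq hz0]
    exact Real.sqrt_le_sqrt hsq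
  rcases eq_or_ne c 0 with hc | hc
  · rcases eq_or_ne a d with had | had
    · -- c = 0, a = d : constant |b|
      have hQ : ∀ v : ℍ, (dispF A v)^2 = b^2 * (1/v.im) * (1/v.im) / 4 := by
        intro v
        unfold dispF
        rw [← ha, ← hb, ← hc', ← hd']
        have hv := v.im_pos
        have hval : (c:ℂ) * (v:ℂ)^2 + ((d:ℂ) - (a:ℂ)) * (v:ℂ) - (b:ℂ) = -(b:ℂ) := by
          rw [hc, had]; push_cast; ring
        rw [hval, norm_neg, Complex.norm_real, Real.norm_eq_abs, div_pow, sq_abs]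
        field_simp [hv.ne'] <;> first | ring1 | (exact Or.inl (by ring)) | (exact Or.inr (by ring)) | (exact Or.inl trivial) | (exact Or.inr trivial)
      rw [hQ w, mul_pow, hQ z]
      have h1 := inv_im_le z w
      have h2 : (0:ℝ) ≤ 1 / w.im := by positivity
      nlinarith [mul_le_mul h1 h1 h2 (by positivity : (0:ℝ) ≤ e * (1/z.im)), sq_nonneg b]
    · -- c = 0, a ≠ d : linear
      set r : ℝ := b / (d - a) with hr
      have hda : d - a ≠ 0 := sub_ne_zero.2 (Ne.symm had)
      have hprodL : (d - a) * r = b := by rw [hr]; field_simp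
      clear hr
      clear_value r
      have factor : ∀ ζ : ℂ, (c:ℂ) * ζ^2 + ((d:ℂ) - (a:ℂ)) * ζ - (b:ℂ)
          = ((d:ℂ) - (a:ℂ)) * (ζ - (r:ℂ)) := by
        intro ζ
        have hcC0 : ((c:ℝ):ℂ) = 0 := by exact_mod_cast hc
        have hprodLC : ((d:ℂ) - (a:ℂ)) * (r:ℂ) = (b:ℂ) := by exact_mod_cast hprodL
        linear_combination ζ^2 * hcC0 + hprodLC
      have hQ : ∀ v : ℍ, (dispF A v)^2
          = (d-a)^2 * (Complex.normSq ((v:ℂ) - (r:ℂ))/v.im) * (1/v.im) / 4 := by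
        intro v
        unfold dispF
        rw [← ha, ← hb, ← hc', ← hd', factor (v:ℂ)]
        have hv := v.im_pos
        rw [show ((d:ℂ) - (a:ℂ)) = ((d - a : ℝ) : ℂ) from by push_cast; ring] at *
        rw [norm_mul, Complex.norm_real, Real.norm_eq_abs, div_pow, mul_pow, Complex.sq_norm, sq_abs]
        field_simp [hv.ne'] <;> first | ring1 | (exact Or.inl (by ring)) | (exact Or.inr (by ring)) | (exact Or.inl trivial) | (exact Or.inr trivial)
      rw [hQ w, mul_pow, hQ z]
      have h1 := busemann r z w
      have h2 := inv_im_le z w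
      have hn2 : (0:ℝ) ≤ 1/w.im := by positivity
      nlinarith [mul_le_mul h1 h2 hn2 (by
        have := Complex.normSq_nonneg ((z:ℂ) - (r:ℂ)); positivity), sq_nonneg (d-a)]
  · -- c ≠ 0 : two real roots
    set s : ℝ := Real.sqrt ((d - a)^2 + 4*b*c) with hs
    have hs2 : s^2 = (d - a)^2 + 4*b*c := Real.sq_sqrt hdisc
    set r₁ : ℝ := ((a - d) + s) / (2*c) with hr₁
    set r₂ : ℝ := ((a - d) - s) / (2*c) with hr₂
    have hsum : c * (r₁ + r₂) = a - d := by rw [hr₁, hr₂]; field_simp; ring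
    have hprod : c * (r₁ * r₂) = -b := by
      rw [hr₁, hr₂]
      field_simp
      linear_combination (-1:ℝ) * hs2
    clear hs hr₁ hr₂
    clear_value s r₁ r₂
    have factor : ∀ ζ : ℂ, (c:ℂ) * ζ^2 + ((d:ℂ) - (a:ℂ)) * ζ - (b:ℂ)
        = (c:ℂ) * (ζ - (r₁:ℂ)) * (ζ - (r₂:ℂ)) := by
      intro ζ
      have hsumC : (c:ℂ) * ((r₁:ℂ) + (r₂:ℂ)) = (a:ℂ) - (d:ℂ) := by exact_mod_cast hsum
      have hprodC : (c:ℂ) * ((r₁:ℂ) * (r₂:ℂ)) = -(b:ℂ) := by exact_mod_cast hprod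
      linear_combination ζ * hsumC - hprodC
    have hQ : ∀ v : ℍ, (dispF A v)^2
        = c^2 * (Complex.normSq ((v:ℂ) - (r₁:ℂ))/v.im) * (Complex.normSq ((v:ℂ) - (r₂:ℂ))/v.im) / 4 := by
      intro v
      unfold dispF
      rw [← ha, ← hb, ← hc', ← hd', factor (v:ℂ)]
      have hv := v.im_pos
      rw [norm_mul, norm_mul, Complex.norm_real, Real.norm_eq_abs, div_pow, mul_pow, mul_pow,
        Complex.sq_norm, Complex.sq_norm, sq_abs]
      field_simp [hv.ne'] <;> first | ring1 | (exact Or.inl (by ring)) | (exact Or.inr (by ring)) | (exact Or.inl trivial) | (exact Or.inr trivial)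
    rw [hQ w, mul_pow, hQ z]
    have h1 := busemann r₁ z w
    have h2 := busemann r₂ z w
    have hn1 : (0:ℝ) ≤ Complex.normSq ((w:ℂ) - (r₂:ℂ))/w.im := by
      have := Complex.normSq_nonneg ((w:ℂ) - (r₂:ℂ)); positivity
    have hn3 : (0:ℝ) ≤ e * (Complex.normSq ((z:ℂ) - (r₁:ℂ))/z.im) := by
      have := Complex.normSq_nonneg ((z:ℂ) - (r₁:ℂ)); positivity
    nlinarith [mul_le_mul h1 h2 hn1 hn3, sq_nonneg c]

lemma arsinh_mul_le (K x : ℝ) (hK : 1 ≤ K) (hx : 0 ≤ x) :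
    Real.arsinh (K * x) ≤ K * Real.arsinh x := by
  rw [← Real.arsinh_sinh (K * Real.arsinh x)]
  apply Real.arsinh_le_arsinh.2
  calc K * x = K * Real.sinh (Real.arsinh x) := by rw [Real.sinh_arsinh]
    _ ≤ Real.sinh (K * Real.arsinh x) :=
      mul_sinh_le _ _ hK (Real.arsinh_nonneg_iff.2 hx)

end Aux

/-- For every `D > 0` there exists `C ≥ 1` such that for every non-elliptic
`A ∈ SL(2,ℝ)` (i.e. `|tr A| ≥ 2`) and all `z, w ∈ ℍ` with `d_ℍ(z,w) ≤ D`, we have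
`d_ℍ(w, A·w) ≤ C · d_ℍ(z, A·z)`. -/
theorem stmt0 (D : ℝ) (hD : 0 < D) :
    ∃ C : ℝ, 1 ≤ C ∧
      ∀ A : SL(2, ℝ), 2 ≤ |Matrix.trace (A : Matrix (Fin 2) (Fin 2) ℝ)| →
        ∀ z w : ℍ, dist z w ≤ D →
          dist w (A • w) ≤ C * dist z (A • z) := by
  refine ⟨Real.exp D, Real.one_le_exp hD.le, fun A htr z w hzw => ?_⟩
  have htr' : 2 ≤ |A 0 0 + A 1 1| := by
    rwa [Matrix.trace_fin_two] at htr
  have h0 : 0 ≤ dispF A z := by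
    unfold dispF
    positivity
  have h1 : dispF A w ≤ Real.exp D * dispF A z := by
    calc dispF A w ≤ Real.exp (dist z w) * dispF A z := dispF_le A htr' z w
      _ ≤ Real.exp D * dispF A z :=
        mul_le_mul_of_nonneg_right (Real.exp_le_exp.2 hzw) h0
  rw [dist_self_smul A z, dist_self_smul A w]
  calc 2 * Real.arsinh (dispF A w) ≤ 2 * Real.arsinh (Real.exp D * dispF A z) := by
        have := Real.arsinh_le_arsinh.2 h1
        linarith
    _ ≤ 2 * (Real.exp D * Real.arsinh (dispF A z)) := by
        have := arsinh_mul_le (Real.exp D) (dispF A z) (Real.one_le_exp hD.le) h0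
        linarith
    _ = Real.exp D * (2 * Real.arsinh (dispF A z)) := by ring
end

section
/- Let D > 0. Then there exists a constant C ≥ 1 such that for every subgroup Γ of SL(2,ℝ) with the property that |tr A| ≥ 2 for every A ∈ Γ (i.e. Γ contains no elliptic elements), and for all points z, w in the upper half-plane ℍ with d_ℍ(z, w) ≤ D, one has inf{ d_ℍ(w, A·w) : A ∈ Γ, A ∉ {I, −I} } ≤ C · inf{ d_ℍ(z, A·z) : A ∈ Γ, A ∉ {I, −I} }, where the infima are taken in the extended nonnegative reals [0, ∞] (with inf ∅ = ∞). -/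
open UpperHalfPlane Matrix
open scoped MatrixGroups ENNReal


set_option synthInstance.maxHeartbeats 400000
set_option maxHeartbeats 1000000

noncomputable section

namespace Stmt1Aux

lemma im_smul' (g : SL(2,ℝ)) (z : ℍ) :
    (g • z).im = z.im / Complex.normSq ((g 1 0 : ℂ) * z + g 1 1) := by
  rw [show g • z = (g : GL (Fin 2) ℝ) • z from rfl, im_smul_eq_div_normSq]
  simp [g.prop, denom]

lemma coe_smul' (g : SL(2,ℝ)) (z : ℍ) :
    ((g • z : ℍ) : ℂ) = ((g 0 0 : ℂ) * z + g 0 1) / ((g 1 0 : ℂ) * z + g 1 1) := by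
  rw [coe_specialLinearGroup_apply]; rfl

lemma denom_ne_zero' (g : SL(2,ℝ)) (z : ℍ) : ((g 1 0 : ℂ) * z + g 1 1) ≠ 0 :=
  denom_ne_zero (g : GL(2,ℝ)⁺) z

/-- Displacement formula: `sinh(d(z, g z)/2) = |c z² + (d-a) z - b| / (2 im z)`. -/
lemma sinh_half (g : SL(2,ℝ)) (z : ℍ) :
    Real.sinh (dist z (g • z) / 2)
      = ‖(g 1 0 : ℂ) * z ^ 2 + ((g 1 1 : ℂ) - g 0 0) * z - g 0 1‖ / (2 * z.im) := by
  have hu : ((g 1 0 : ℂ) * z + g 1 1) ≠ 0 := denom_ne_zero' g z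
  have hau : ‖(g 1 0 : ℂ) * z + g 1 1‖ ≠ 0 := by simpa using hu
  rw [sinh_half_dist, Complex.dist_eq, coe_smul', im_smul']
  have h1 : (z:ℂ) - ((g 0 0 : ℂ) * z + g 0 1) / ((g 1 0 : ℂ) * z + g 1 1)
      = ((g 1 0 : ℂ) * z ^ 2 + ((g 1 1 : ℂ) - g 0 0) * z - g 0 1) / ((g 1 0 : ℂ) * z + g 1 1) := by
    rw [eq_div_iff hu, sub_mul, div_mul_cancel₀ _ hu]
    ring
  rw [h1, norm_div]
  have h2 : Real.sqrt (z.im * (z.im / Complex.normSq ((g 1 0 : ℂ) * z + g 1 1)))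
      = z.im / ‖(g 1 0 : ℂ) * z + g 1 1‖ := by
    rw [Complex.normSq_eq_norm_sq,
      show z.im * (z.im / ‖(g 1 0:ℂ) * z + g 1 1‖ ^ 2)
        = (z.im / ‖(g 1 0:ℂ) * z + g 1 1‖) ^ 2 by field_simp]
    exact Real.sqrt_sq (by positivity)
  rw [h2]
  have him := z.im_ne_zero
  field_simp

/-- Busemann-type bound at infinity: `1/im` is multiplicatively `exp(dist)`-Lipschitz. -/
lemma businf (z w : ℍ) : 1 / w.im ≤ Real.exp (dist z w) * (1 / z.im) := by
  have h := im_le_im_mul_exp_dist z w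
  rw [mul_one_div, div_le_div_iff₀ w.im_pos z.im_pos]
  nlinarith [w.im_pos, Real.exp_pos (dist z w)]

lemma coe_sub_ne (z : ℍ) (r : ℝ) : (z:ℂ) - r ≠ 0 := by
  intro h
  have : (z:ℂ).im = (r:ℂ).im := by rw [sub_eq_zero] at h; rw [h]
  simp [z.im_ne_zero] at this

/-- Busemann-type bound at a real point `r`. -/
lemma busemann (r : ℝ) (z w : ℍ) :
    ‖(w:ℂ) - r‖ ^ 2 / w.im
      ≤ Real.exp (dist z w) * (‖(z:ℂ) - r‖ ^ 2 / z.im) := by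
  have hdet : ((!![0,-1;1,-r] : Matrix (Fin 2) (Fin 2) ℝ)).det = 1 := by
    simp [Matrix.det_fin_two_of]
  set g : SL(2,ℝ) := ⟨!![0,-1;1,-r], hdet⟩ with hgdef
  have hg : ∀ u : ℍ, (g • u).im = u.im / ‖(u:ℂ) - r‖ ^ 2 := by
    intro u
    rw [im_smul' g u, Complex.normSq_eq_norm_sq]
    have harg : ((g 1 0 : ℝ) : ℂ) * u + ((g 1 1 : ℝ) : ℂ) = (u:ℂ) - r := by
      have h10 : g 1 0 = 1 := rfl
      have h11 : g 1 1 = -r := rfl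
      rw [h10, h11]
      push_cast
      ring
    rw [harg]
  have key := im_le_im_mul_exp_dist (g • z) (g • w)
  rw [dist_smul, hg, hg] at key
  have hAz : 0 < ‖(z:ℂ) - r‖ ^ 2 :=
    pow_pos (norm_pos_iff.mpr (coe_sub_ne z r)) 2
  have hAw : 0 < ‖(w:ℂ) - r‖ ^ 2 :=
    pow_pos (norm_pos_iff.mpr (coe_sub_ne w r)) 2
  rw [div_mul_eq_mul_div, div_le_div_iff₀ hAz hAw] at key
  rw [mul_div_assoc', div_le_div_iff₀ w.im_pos z.im_pos]
  nlinarith [key]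

lemma le_of_sq_le_sq' {x y : ℝ} (hx : 0 ≤ x) (hy : 0 ≤ y) (h : x^2 ≤ y^2) : x ≤ y := by
  nlinarith

/-- Main inequality at the level of the quadratic displacement expression. -/
lemma absineq (a b c d : ℝ) (hdet : a * d - b * c = 1) (htr : 2 ≤ |a + d|) (z w : ℍ) :
    ‖(c:ℂ) * w ^ 2 + ((d:ℂ) - a) * w - b‖ / (2 * w.im)
      ≤ Real.exp (dist z w) *
        (‖(c:ℂ) * z ^ 2 + ((d:ℂ) - a) * z - b‖ / (2 * z.im)) := by
  set E := Real.exp (dist z w) with hEdef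
  have hE : 0 < E := Real.exp_pos _
  by_cases hc : c = 0
  · have had : a * d = 1 := by rw [hc] at hdet; linarith
    by_cases hda : d - a = 0
    · have hsimp : ∀ u : ℂ, (c:ℂ) * u ^ 2 + ((d:ℂ) - a) * u - b = -(b:ℂ) := by
        intro u
        have : ((d:ℂ) - a) = 0 := by
          have : ((d - a : ℝ) : ℂ) = 0 := by exact_mod_cast congrArg (fun x : ℝ => (x:ℂ)) hda
          push_cast at this; linear_combination this
        rw [hc, this]; push_cast; ring
      rw [hsimp, hsimp]
      have h := businf z w
      have hb : (0:ℝ) ≤ |b| / 2 := by positivity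
      have habs : ‖-(b:ℂ)‖ = |b| := by
        rw [show -(b:ℂ) = ((-b : ℝ) : ℂ) by push_cast; ring, Complex.norm_real, Real.norm_eq_abs, abs_neg]
      calc ‖-(b:ℂ)‖ / (2 * w.im) = (|b| / 2) * (1 / w.im) := by
            rw [habs]; ring
        _ ≤ (|b| / 2) * (E * (1 / z.im)) := by
            exact mul_le_mul_of_nonneg_left h hb
        _ = E * (‖-(b:ℂ)‖ / (2 * z.im)) := by
            rw [habs]; ring
    · -- c = 0, d ≠ a
      set r : ℝ := b / (d - a) with hrdef
      have hdaC : ((d:ℂ) - a) ≠ 0 := by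
        intro h
        apply hda
        have : ((d - a : ℝ) : ℂ) = 0 := by push_cast; linear_combination h
        exact_mod_cast this
      have hfac : ∀ u : ℂ, (c:ℂ) * u ^ 2 + ((d:ℂ) - a) * u - b = ((d:ℂ) - a) * (u - r) := by
        intro u
        rw [hc, hrdef]
        push_cast
        field_simp
        ring
      have e1 : ∀ u : ℍ, (‖(c:ℂ) * u ^ 2 + ((d:ℂ) - a) * u - b‖ / (2 * u.im)) ^ 2
          = ((d - a) ^ 2 / 4) * (‖(u:ℂ) - r‖ ^ 2 / u.im) * (1 / u.im) := by
        intro u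
        rw [hfac, norm_mul]
        have : ‖(d:ℂ) - a‖ = |d - a| := by
          rw [show ((d:ℂ) - a) = ((d - a : ℝ) : ℂ) by push_cast; ring, Complex.norm_real, Real.norm_eq_abs]
        rw [this]
        have him := u.im_ne_zero
        field_simp
        rw [← sq_abs (d - a)]
        ring
      apply le_of_sq_le_sq' (by positivity) (by positivity)
      rw [mul_pow, e1, e1]
      have h1 := busemann r z w
      have h2 := businf z w
      have hBw : 0 ≤ ‖(w:ℂ) - r‖ ^ 2 / w.im := by positivity
      have hEBz : 0 ≤ E * (‖(z:ℂ) - r‖ ^ 2 / z.im) := by positivity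
      have h12 := mul_le_mul h1 h2 (by positivity) hEBz
      have hK : (0:ℝ) ≤ (d - a) ^ 2 / 4 := by positivity
      calc ((d - a) ^ 2 / 4) * (‖(w:ℂ) - r‖ ^ 2 / w.im) * (1 / w.im)
          ≤ ((d - a) ^ 2 / 4) * ((E * (‖(z:ℂ) - r‖ ^ 2 / z.im)) * (E * (1 / z.im))) := by
            rw [mul_assoc]
            exact mul_le_mul_of_nonneg_left h12 hK
        _ = E ^ 2 * (((d - a) ^ 2 / 4) * (‖(z:ℂ) - r‖ ^ 2 / z.im) * (1 / z.im)) := by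
            ring
  · -- c ≠ 0
    have h4 : 4 ≤ (a + d) ^ 2 := by nlinarith [sq_abs (a + d)]
    set s : ℝ := Real.sqrt ((a + d) ^ 2 - 4) with hsdef
    have hs : s ^ 2 = (a + d) ^ 2 - 4 := Real.sq_sqrt (by linarith)
    set r₁ : ℝ := (a - d + s) / (2 * c) with hr1
    set r₂ : ℝ := (a - d - s) / (2 * c) with hr2
    have hcC : (c:ℂ) ≠ 0 := by exact_mod_cast hc
    have hsum : c * (r₁ + r₂) = a - d := by
      rw [hr1, hr2]; field_simp; ring
    have hprod : c * (r₁ * r₂) = -b := by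
      rw [hr1, hr2]
      field_simp
      linear_combination (-1) * hs - 4 * hdet
    have hsumC : (c:ℂ) * ((r₁:ℂ) + r₂) = (a:ℂ) - d := by exact_mod_cast hsum
    have hprodC : (c:ℂ) * ((r₁:ℂ) * r₂) = -(b:ℂ) := by exact_mod_cast hprod
    have hfac : ∀ u : ℂ, (c:ℂ) * u ^ 2 + ((d:ℂ) - a) * u - b
        = (c:ℂ) * (u - r₁) * (u - r₂) := by
      intro u
      linear_combination u * hsumC - hprodC
    have e1 : ∀ u : ℍ, (‖(c:ℂ) * u ^ 2 + ((d:ℂ) - a) * u - b‖ / (2 * u.im)) ^ 2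
        = (c ^ 2 / 4) * (‖(u:ℂ) - r₁‖ ^ 2 / u.im)
            * (‖(u:ℂ) - r₂‖ ^ 2 / u.im) := by
      intro u
      rw [hfac, norm_mul, norm_mul, Complex.norm_real, Real.norm_eq_abs]
      have him := u.im_ne_zero
      field_simp
      rw [← sq_abs c]
      ring
    apply le_of_sq_le_sq' (by positivity) (by positivity)
    rw [mul_pow, e1, e1]
    have h1 := busemann r₁ z w
    have h2 := busemann r₂ z w
    have hEBz : 0 ≤ E * (‖(z:ℂ) - r₁‖ ^ 2 / z.im) := by positivity
    have h12 := mul_le_mul h1 h2 (by positivity) hEBz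
    have hK : (0:ℝ) ≤ c ^ 2 / 4 := by positivity
    calc (c ^ 2 / 4) * (‖(w:ℂ) - r₁‖ ^ 2 / w.im) * (‖(w:ℂ) - r₂‖ ^ 2 / w.im)
        ≤ (c ^ 2 / 4) * ((E * (‖(z:ℂ) - r₁‖ ^ 2 / z.im))
            * (E * (‖(z:ℂ) - r₂‖ ^ 2 / z.im))) := by
          rw [mul_assoc]
          exact mul_le_mul_of_nonneg_left h12 hK
      _ = E ^ 2 * ((c ^ 2 / 4) * (‖(z:ℂ) - r₁‖ ^ 2 / z.im)
            * (‖(z:ℂ) - r₂‖ ^ 2 / z.im)) := by ring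

lemma sinh_le_mul_exp {t : ℝ} (ht : 0 ≤ t) : Real.sinh t ≤ t * Real.exp (2 * t) := by
  rw [Real.sinh_eq]
  have h1 : Real.exp (-t) ≤ 1 := Real.exp_le_one_iff.mpr (by linarith)
  have h2 : 1 - 2 * t ≤ Real.exp (-(2 * t)) := by linarith [Real.add_one_le_exp (-(2 * t))]
  have h3 : Real.exp (-(2 * t)) * Real.exp (2 * t) = 1 := by rw [← Real.exp_add]; simp
  have h4 : Real.exp t * Real.exp t = Real.exp (2 * t) := by rw [← Real.exp_add]; ring_nf
  have h5 : Real.exp (-t) * Real.exp t = 1 := by rw [← Real.exp_add]; simp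
  nlinarith [Real.exp_pos t, Real.exp_pos (2 * t), Real.exp_pos (-t),
    Real.one_le_exp (by linarith : (0:ℝ) ≤ 2 * t)]

lemma key (g : SL(2,ℝ)) (htr : 2 ≤ |g 0 0 + g 1 1|) (z w : ℍ) :
    Real.sinh (dist w (g • w) / 2)
      ≤ Real.exp (dist z w) * Real.sinh (dist z (g • z) / 2) := by
  have hdet : g 0 0 * g 1 1 - g 0 1 * g 1 0 = 1 := by
    have := g.prop
    rw [Matrix.det_fin_two] at this
    exact this
  rw [sinh_half, sinh_half]
  exact absineq (g 0 0) (g 0 1) (g 1 0) (g 1 1) hdet htr z w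

/-- Per-element comparison of displacements at two nearby points. -/
lemma dispbound (D : ℝ) (hD : 0 < D) (g : SL(2,ℝ)) (htr : 2 ≤ |g 0 0 + g 1 1|)
    (z w : ℍ) (hzw : dist z w ≤ D) :
    dist w (g • w) ≤ (2 * D + 1 + Real.exp (D + 1)) * dist z (g • z) := by
  set dz := dist z (g • z) with hdz
  set dw := dist w (g • w) with hdw
  have hdz0 : 0 ≤ dz := dist_nonneg
  have hdw0 : 0 ≤ dw := dist_nonneg
  have hexp1 : (0:ℝ) < Real.exp (D + 1) := Real.exp_pos _
  rcases le_or_gt 1 dz with h1 | h1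
  · -- additive bound
    have htri : dw ≤ dz + 2 * dist z w := by
      calc dw ≤ dist w z + dist z (g • z) + dist (g • z) (g • w) :=
            dist_triangle4 w z (g • z) (g • w)
        _ = dz + 2 * dist z w := by rw [dist_smul]; rw [dist_comm w z]; ring
    nlinarith
  · -- sinh bound
    have hk := key g htr z w
    have hE : Real.exp (dist z w) ≤ Real.exp D := Real.exp_le_exp.mpr hzw
    have hs1 : dw / 2 ≤ Real.sinh (dw / 2) := Real.self_le_sinh_iff.mpr (by linarith)
    have hs2 : Real.sinh (dz / 2) ≤ (dz / 2) * Real.exp (2 * (dz / 2)) :=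
      sinh_le_mul_exp (by linarith)
    have hs3 : Real.exp (2 * (dz / 2)) ≤ Real.exp 1 := Real.exp_le_exp.mpr (by linarith)
    have hsz : 0 ≤ Real.sinh (dz / 2) := Real.sinh_nonneg_iff.mpr (by linarith)
    have hc1 : dw / 2 ≤ Real.exp D * Real.sinh (dz / 2) := by
      calc dw / 2 ≤ Real.sinh (dw / 2) := hs1
        _ ≤ Real.exp (dist z w) * Real.sinh (dz / 2) := hk
        _ ≤ Real.exp D * Real.sinh (dz / 2) := mul_le_mul_of_nonneg_right hE hsz
    have hc2 : Real.exp D * Real.sinh (dz / 2) ≤ Real.exp D * ((dz / 2) * Real.exp 1) := by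
      apply mul_le_mul_of_nonneg_left _ (Real.exp_pos D).le
      calc Real.sinh (dz / 2) ≤ (dz / 2) * Real.exp (2 * (dz / 2)) := hs2
        _ ≤ (dz / 2) * Real.exp 1 := mul_le_mul_of_nonneg_left hs3 (by linarith)
    have : dw ≤ Real.exp D * Real.exp 1 * dz := by linarith
    rw [← Real.exp_add] at this
    nlinarith

end Stmt1Aux

end

/-- For every `D > 0` there exists `C ≥ 1` such that for every subgroup
`Γ ≤ SL(2,ℝ)` without elliptic elements (`|tr A| ≥ 2` for all `A ∈ Γ`), and
all `z, w ∈ ℍ` with `d_ℍ(z,w) ≤ D`, the infimum (in `[0,∞]`) of the translation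
lengths `d_ℍ(w, A·w)` over nontrivial `A ∈ Γ` is at most `C` times the
corresponding infimum at `z`. -/
theorem stmt1 (D : ℝ) (hD : 0 < D) :
    ∃ C : ℝ, 1 ≤ C ∧
      ∀ Γ : Subgroup SL(2, ℝ),
        (∀ A ∈ Γ, 2 ≤ |Matrix.trace (A : Matrix (Fin 2) (Fin 2) ℝ)|) →
        ∀ z w : ℍ, dist z w ≤ D →
          sInf {d : ℝ≥0∞ | ∃ A ∈ Γ, A ≠ 1 ∧ A ≠ -1 ∧
              d = ENNReal.ofReal (dist w (A • w))}
            ≤ ENNReal.ofReal C *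
              sInf {d : ℝ≥0∞ | ∃ A ∈ Γ, A ≠ 1 ∧ A ≠ -1 ∧
                d = ENNReal.ofReal (dist z (A • z))} := by
  have hexp : (0:ℝ) < Real.exp (D + 1) := Real.exp_pos _
  refine ⟨2 * D + 1 + Real.exp (D + 1), by linarith, ?_⟩
  intro Γ hΓ z w hzw
  set C : ℝ := 2 * D + 1 + Real.exp (D + 1) with hCdef
  have hC0 : (0:ℝ) ≤ C := by dsimp [C]; linarith
  set SW := {d : ℝ≥0∞ | ∃ A ∈ Γ, A ≠ 1 ∧ A ≠ -1 ∧ d = ENNReal.ofReal (dist w (A • w))} with hSW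
  set SZ := {d : ℝ≥0∞ | ∃ A ∈ Γ, A ≠ 1 ∧ A ≠ -1 ∧ d = ENNReal.ofReal (dist z (A • z))} with hSZ
  have hmem : ∀ e ∈ SZ, sInf SW ≤ ENNReal.ofReal C * e := by
    rintro e ⟨A, hA, h1, h2, rfl⟩
    have htr : 2 ≤ |A 0 0 + A 1 1| := by
      have h := hΓ A hA
      rwa [Matrix.trace_fin_two] at h
    have hb := Stmt1Aux.dispbound D hD A htr z w hzw
    calc sInf SW ≤ ENNReal.ofReal (dist w (A • w)) := sInf_le ⟨A, hA, h1, h2, rfl⟩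
      _ ≤ ENNReal.ofReal (C * dist z (A • z)) := ENNReal.ofReal_le_ofReal hb
      _ = ENNReal.ofReal C * ENNReal.ofReal (dist z (A • z)) := ENNReal.ofReal_mul hC0
  have hc0 : (ENNReal.ofReal C) ≠ 0 := by
    simp only [ne_eq, ENNReal.ofReal_eq_zero, not_le]
    dsimp [C]; linarith
  have hct : (ENNReal.ofReal C) ≠ ⊤ := ENNReal.ofReal_ne_top
  rw [sInf_eq_iInf' (s := SZ), ENNReal.mul_iInf_of_ne hc0 hct]
  exact le_iInf fun e => hmem e e.2
end

section
/- Let r₀ > 1 and let A(r₀) = {z ∈ ℂ : r₀⁻¹ < |z| < r₀}. Let f : A(r₀) → ℂ be holomorphic on A(r₀) and integrable on A(r₀) with respect to planar Lebesgue measure. Then ∫_{A(r₀)} (z²/|z|²)·f(z) dA(z) = 2·(log r₀) · ∫₀^{2π} e^{2iθ}·f(e^{iθ}) dθ. -/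
open MeasureTheory Real Complex Set intervalIntegral Metric

lemma integrableOn_polar_aux {F : ℂ → ℂ} (hF : Integrable F) :
    IntegrableOn (fun p : ℝ × ℝ => p.1 • F (Complex.polarCoord.symm p))
      polarCoord.target := by
  have B_det : ∀ p : ℝ × ℝ, (LinearMap.toContinuousLinearMap
      (Matrix.toLin (Module.Basis.finTwoProd ℝ) (Module.Basis.finTwoProd ℝ)
      !![Real.cos p.2, -p.1 * Real.sin p.2; Real.sin p.2, p.1 * Real.cos p.2])).det = p.1 := by
    intro p
    conv_rhs => rw [← one_mul p.1, ← Real.cos_sq_add_sin_sq p.2]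
    simp only [neg_mul, LinearMap.det_toContinuousLinearMap, LinearMap.det_toLin,
      Matrix.det_fin_two_of, sub_neg_eq_add]
    ring
  have hG : Integrable (fun q : ℝ × ℝ => F (Complex.measurableEquivRealProd.symm q)) := by
    rw [← MeasurePreserving.integrable_comp_emb Complex.volume_preserving_equiv_real_prod.symm
      (Complex.measurableEquivRealProd.symm.measurableEmbedding)] at hF
    exact hF
  have hG' : IntegrableOn (fun q : ℝ × ℝ => F (Complex.measurableEquivRealProd.symm q))
      (polarCoord.symm '' polarCoord.target) := hG.integrableOn
  have key := (integrableOn_image_iff_integrableOn_abs_det_fderiv_smul volume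
      polarCoord.open_target.measurableSet
      (fun p _ => (hasFDerivAt_polarCoord_symm p).hasFDerivWithinAt)
      (polarCoord.symm.injOn)
      (fun q : ℝ × ℝ => F (Complex.measurableEquivRealProd.symm q))).mp hG'
  apply key.congr_fun ?_ polarCoord.open_target.measurableSet
  intro p hp
  simp only
  rw [det_fderivPolarCoordSymm p, abs_of_pos hp.1]
  rfl

lemma circleInt_eq (s : ℝ) (f : ℂ → ℂ) :
    (∮ z in C(0, s), z * f z)
      = (Complex.I * (s : ℂ) ^ 2) *
        ∫ θ in (0:ℝ)..(2*π), Complex.exp (2*θ*Complex.I) * f (s * Complex.exp (θ*Complex.I)) := by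
  rw [circleIntegral, ← intervalIntegral.integral_const_mul]
  refine intervalIntegral.integral_congr fun θ _ => ?_
  simp only [deriv_circleMap, circleMap, zero_add, smul_eq_mul]
  rw [show ((2:ℂ)*θ*Complex.I) = θ*Complex.I + θ*Complex.I by ring, Complex.exp_add]
  ring

lemma annulus_open (r₀ : ℝ) :
    IsOpen {z : ℂ | r₀⁻¹ < ‖z‖ ∧ ‖z‖ < r₀} := by
  have : {z : ℂ | r₀⁻¹ < ‖z‖ ∧ ‖z‖ < r₀}
      = (fun z : ℂ => ‖z‖) ⁻¹' (Set.Ioo r₀⁻¹ r₀) := rfl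
  rw [this]
  exact isOpen_Ioo.preimage continuous_norm

lemma circle_indep (r₀ : ℝ) (hr₀ : 1 < r₀) (f : ℂ → ℂ)
    (hdiff : DifferentiableOn ℂ f {z : ℂ | r₀⁻¹ < ‖z‖ ∧ ‖z‖ < r₀})
    {a b : ℝ} (ha : r₀⁻¹ < a) (hab : a ≤ b) (hb : b < r₀) :
    (∮ z in C(0, b), z * f z) = ∮ z in C(0, a), z * f z := by
  set A := {z : ℂ | r₀⁻¹ < ‖z‖ ∧ ‖z‖ < r₀} with hA
  have ha0 : 0 < a := lt_trans (inv_pos.2 (lt_trans one_pos hr₀)) ha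
  have hsub : closedBall (0:ℂ) b \ ball (0:ℂ) a ⊆ A := by
    rintro z ⟨hz1, hz2⟩
    simp only [mem_closedBall, mem_ball, Complex.dist_eq, sub_zero, not_lt] at hz1 hz2
    exact ⟨lt_of_lt_of_le ha hz2, lt_of_le_of_lt hz1 hb⟩
  have hg : DifferentiableOn ℂ (fun z => z * f z) A :=
    differentiableOn_id.mul hdiff
  refine circleIntegral_eq_of_differentiable_on_annulus_off_countable ha0 hab countable_empty
    (hg.continuousOn.mono hsub) ?_
  rintro z ⟨hz, -⟩
  refine hg.differentiableAt ((annulus_open r₀).mem_nhds ?_)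
  exact hsub ⟨ball_subset_closedBall hz.1, fun h => hz.2 (ball_subset_closedBall h)⟩

lemma circle_avg (r₀ : ℝ) (hr₀ : 1 < r₀) (f : ℂ → ℂ)
    (hdiff : DifferentiableOn ℂ f {z : ℂ | r₀⁻¹ < ‖z‖ ∧ ‖z‖ < r₀})
    {r : ℝ} (hr1 : r₀⁻¹ < r) (hr2 : r < r₀) :
    ∫ θ in (0:ℝ)..(2*π), Complex.exp (2*θ*Complex.I) * f (r * Complex.exp (θ*Complex.I))
      = (((r:ℂ)) ^ 2)⁻¹ *
        ∫ θ in (0:ℝ)..(2*π), Complex.exp (2*θ*Complex.I) * f (Complex.exp (θ*Complex.I)) := by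
  have h1a : r₀⁻¹ < 1 := inv_lt_one_of_one_lt₀ hr₀
  have hr0 : (0:ℝ) < r := lt_trans (inv_pos.2 (lt_trans one_pos hr₀)) hr1
  have key : (∮ z in C(0, r), z * f z) = ∮ z in C(0, (1:ℝ)), z * f z := by
    rcases le_total r 1 with h | h
    · exact (circle_indep r₀ hr₀ f hdiff hr1 h hr₀).symm
    · exact circle_indep r₀ hr₀ f hdiff h1a h hr2
  rw [circleInt_eq r f, circleInt_eq 1 f] at key
  have hrne : ((r:ℂ))^2 ≠ 0 := pow_ne_zero _ (Complex.ofReal_ne_zero.2 (ne_of_gt hr0))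
  have hIne : Complex.I ≠ 0 := Complex.I_ne_zero
  simp only [Complex.ofReal_one, one_pow, mul_one, one_mul] at key
  rw [eq_inv_mul_iff_mul_eq₀ hrne]
  apply mul_left_cancel₀ hIne
  rw [← mul_assoc]
  exact key

lemma exp_periodic_aux (r : ℝ) (f : ℂ → ℂ) :
    Function.Periodic
      (fun θ : ℝ => Complex.exp (2*θ*Complex.I) * f (r * Complex.exp (θ*Complex.I))) (2*π) := by
  intro θ
  have h1 : Complex.exp ((2:ℂ)*(θ + 2*π)*Complex.I) = Complex.exp (2*θ*Complex.I) := by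
    rw [show ((2:ℂ)*((θ:ℝ) + 2*π)*Complex.I) = 2*θ*Complex.I + 2*(2*π*Complex.I) by ring,
      Complex.exp_add, show ((2:ℂ)*(2*π*Complex.I)) = 2*π*Complex.I + 2*π*Complex.I by ring,
      Complex.exp_add, Complex.exp_two_pi_mul_I]
    simp
  have h2 : Complex.exp (((θ:ℝ) + 2*π : ℝ)*Complex.I) = Complex.exp (θ*Complex.I) := by
    rw [show ((((θ:ℝ) + 2*π : ℝ)):ℂ)*Complex.I = θ*Complex.I + 2*π*Complex.I by push_cast; ring,
      Complex.exp_add, Complex.exp_two_pi_mul_I, mul_one]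
  simp only [Complex.ofReal_add, Complex.ofReal_mul, Complex.ofReal_ofNat] at h1 h2 ⊢
  rw [h1, h2]

/-- For a holomorphic, Lebesgue-integrable function `f` on the annulus
`A(r₀) = {r₀⁻¹ < |z| < r₀}`, the pairing of `z²/|z|²` against `f` equals
`2 log r₀` times the circle average `∫₀^{2π} e^{2iθ} f(e^{iθ}) dθ`. -/
theorem stmt5 (r₀ : ℝ) (hr₀ : 1 < r₀)
    (f : ℂ → ℂ)
    (hdiff : DifferentiableOn ℂ f {z : ℂ | r₀⁻¹ < ‖z‖ ∧ ‖z‖ < r₀})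
    (hint : IntegrableOn f {z : ℂ | r₀⁻¹ < ‖z‖ ∧ ‖z‖ < r₀} volume) :
    ∫ z in {z : ℂ | r₀⁻¹ < ‖z‖ ∧ ‖z‖ < r₀},
        (z ^ 2 / ((‖z‖ : ℂ) ^ 2)) * f z ∂volume
      = (2 * Real.log r₀ : ℝ) *
        ∫ θ in (0 : ℝ)..(2 * π),
          Complex.exp (2 * θ * Complex.I) * f (Complex.exp (θ * Complex.I)) := by
  set A := {z : ℂ | r₀⁻¹ < ‖z‖ ∧ ‖z‖ < r₀} with hA
  have hr₀0 : (0:ℝ) < r₀ := lt_trans one_pos hr₀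
  have hinv0 : (0:ℝ) < r₀⁻¹ := inv_pos.2 hr₀0
  have hAmeas : MeasurableSet A := (annulus_open r₀).measurableSet
  set h : ℂ → ℂ := fun z => z ^ 2 / ((‖z‖ : ℂ) ^ 2) * f z with hh
  set I₁ : ℂ := ∫ θ in (0 : ℝ)..(2 * π),
      Complex.exp (2 * θ * Complex.I) * f (Complex.exp (θ * Complex.I)) with hI₁
  -- integrability of h on A
  have hcontg : ContinuousOn (fun z : ℂ => z ^ 2 / ((‖z‖ : ℂ) ^ 2)) A := by
    apply ContinuousOn.div
    · exact (continuous_pow 2).continuousOn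
    · exact (Complex.continuous_ofReal.comp continuous_norm).continuousOn.pow 2
    · intro z hz
      have : ‖z‖ ≠ 0 := ne_of_gt (lt_trans hinv0 hz.1)
      simpa using this
  have hIntOnh : IntegrableOn h A := by
    apply Integrable.mono' hint.norm
      ((hcontg.aestronglyMeasurable hAmeas).mul hint.aestronglyMeasurable)
    rw [ae_restrict_iff' hAmeas]
    filter_upwards with z hz
    have hz0 : ‖z‖ ≠ 0 := ne_of_gt (lt_trans hinv0 hz.1)
    simp only [Pi.mul_apply, norm_mul, norm_div, norm_pow, Complex.norm_real, norm_norm]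
    rw [div_self (pow_ne_zero 2 hz0), one_mul]
  set F : ℂ → ℂ := A.indicator h with hF
  have hIntF : Integrable F := (integrable_indicator_iff hAmeas).2 hIntOnh
  -- pass to polar coordinates
  have step1 : (∫ z in A, h z ∂volume) = ∫ z, F z := (MeasureTheory.integral_indicator hAmeas).symm
  have step2 : (∫ z, F z)
      = ∫ p in polarCoord.target, p.1 • F (Complex.polarCoord.symm p) :=
    (Complex.integral_comp_polarCoord_symm F).symm
  -- continuity of polar symm
  have hcsymm : Continuous (fun p : ℝ × ℝ => Complex.polarCoord.symm p) := by
    simp only [Complex.polarCoord_symm_apply]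
    fun_prop
  have hpreA : MeasurableSet ((fun p : ℝ × ℝ => Complex.polarCoord.symm p) ⁻¹' A) :=
    hAmeas.preimage hcsymm.measurable
  set T : Set (ℝ × ℝ) := Set.Ioo r₀⁻¹ r₀ ×ˢ Set.Ioo (-π) π with hT
  have hTtarget : polarCoord.target ∩ ((fun p : ℝ × ℝ => Complex.polarCoord.symm p) ⁻¹' A)
      = T := by
    ext p
    simp only [polarCoord_target, Set.mem_inter_iff, Set.mem_prod, Set.mem_Ioi, Set.mem_Ioo,
      Set.mem_preimage, hA, Set.mem_setOf_eq, Complex.norm_polarCoord_symm, hT]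
    constructor
    · rintro ⟨⟨h1, h2⟩, h3, h4⟩
      rw [abs_of_pos h1] at h3 h4
      exact ⟨⟨h3, h4⟩, h2⟩
    · rintro ⟨⟨h3, h4⟩, h2⟩
      have h1 : 0 < p.1 := lt_trans hinv0 h3
      exact ⟨⟨h1, h2⟩, by rwa [abs_of_pos h1], by rwa [abs_of_pos h1]⟩
  have hind : ∀ p : ℝ × ℝ, p.1 • F (Complex.polarCoord.symm p)
      = ((fun p : ℝ × ℝ => Complex.polarCoord.symm p) ⁻¹' A).indicator
          (fun p : ℝ × ℝ => p.1 • h (Complex.polarCoord.symm p)) p := by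
    intro p
    simp only [hF]
    by_cases hp : Complex.polarCoord.symm p ∈ A
    · rw [Set.indicator_of_mem hp, Set.indicator_of_mem (show p ∈ _ ⁻¹' A from hp)]
    · rw [Set.indicator_of_notMem hp, Set.indicator_of_notMem
        (show p ∉ _ ⁻¹' A from hp), smul_zero]
  have step3 : (∫ p in polarCoord.target, p.1 • F (Complex.polarCoord.symm p))
      = ∫ p in T, p.1 • h (Complex.polarCoord.symm p) := by
    simp_rw [hind]
    rw [setIntegral_indicator hpreA, hTtarget]
  -- the integrand on T
  set G : ℝ × ℝ → ℂ := fun p =>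
    p.1 • (Complex.exp (2*p.2*Complex.I) * f (p.1 * Complex.exp (p.2*Complex.I))) with hG
  have hsymm_eq : ∀ p : ℝ × ℝ, Complex.polarCoord.symm p
      = (p.1 : ℂ) * Complex.exp (p.2 * Complex.I) := by
    intro p
    rw [Complex.polarCoord_symm_apply, Complex.exp_mul_I]
    norm_cast
  have hTeq : ∀ p ∈ T, p.1 • h (Complex.polarCoord.symm p) = G p := by
    rintro p hp
    have hp1 : 0 < p.1 := lt_trans hinv0 hp.1.1
    have habs : ‖Complex.polarCoord.symm p‖ = p.1 := by
      rw [Complex.norm_polarCoord_symm, abs_of_pos hp1]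
    have hexp2 : Complex.exp ((p.2:ℂ) * Complex.I) ^ 2 = Complex.exp (2*p.2*Complex.I) := by
      rw [← Complex.exp_nat_mul]
      ring_nf
    simp only [hh, hG, habs, hsymm_eq p]
    rw [mul_pow, hexp2]
    have : ((p.1:ℂ))^2 ≠ 0 := pow_ne_zero _ (Complex.ofReal_ne_zero.2 (ne_of_gt hp1))
    field_simp
    rw [← hsymm_eq p, habs, hsymm_eq p]
    field_simp
    congr 1
    rw [mul_assoc, mul_div_cancel_left₀ _ (Complex.ofReal_ne_zero.2 (ne_of_gt hp1))]
  have step4 : (∫ p in T, p.1 • h (Complex.polarCoord.symm p)) = ∫ p in T, G p := by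
    apply setIntegral_congr_fun (measurableSet_Ioo.prod measurableSet_Ioo) hTeq
  -- integrability of G on T
  have hIntG : IntegrableOn G T := by
    have h0 := integrableOn_polar_aux hIntF
    have h1 : IntegrableOn (fun p : ℝ × ℝ => p.1 • F (Complex.polarCoord.symm p)) T := by
      apply h0.mono_set
      rw [← hTtarget]; exact Set.inter_subset_left
    have h2 : IntegrableOn (fun p : ℝ × ℝ => p.1 • h (Complex.polarCoord.symm p)) T := by
      apply h1.congr_fun ?_ (measurableSet_Ioo.prod measurableSet_Ioo)
      intro p hp
      show p.1 • F (Complex.polarCoord.symm p) = p.1 • h (Complex.polarCoord.symm p)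
      rw [hind p, Set.indicator_of_mem]
      rw [← hTtarget] at hp
      exact hp.2
    exact (h2.congr_fun hTeq (measurableSet_Ioo.prod measurableSet_Ioo))
  -- Fubini
  have step5 : (∫ p in T, G p)
      = ∫ r in Set.Ioo r₀⁻¹ r₀, ∫ θ in Set.Ioo (-π) π, G (r, θ) := by
    rw [hT] at hIntG ⊢
    rw [Measure.volume_eq_prod] at hIntG ⊢
    exact setIntegral_prod G hIntG
  -- inner integral
  have inner_eq : ∀ r ∈ Set.Ioo r₀⁻¹ r₀,
      (∫ θ in Set.Ioo (-π) π, G (r, θ)) = (r⁻¹ : ℝ) • I₁ := by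
    rintro r ⟨hr1, hr2⟩
    have hr0 : (0:ℝ) < r := lt_trans hinv0 hr1
    have : (∫ θ in Set.Ioo (-π) π, G (r, θ))
        = ∫ θ in (-π)..π, (r : ℝ) • (Complex.exp (2*θ*Complex.I)
            * f (r * Complex.exp (θ*Complex.I))) := by
      rw [intervalIntegral.integral_of_le (by linarith [Real.pi_pos] : -π ≤ π),
        MeasureTheory.integral_Ioc_eq_integral_Ioo]
    rw [this, intervalIntegral.integral_smul]
    have hper := exp_periodic_aux r f
    have hshift : (∫ θ in (-π)..π, Complex.exp (2*θ*Complex.I) * f (r * Complex.exp (θ*Complex.I)))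
        = ∫ θ in (0:ℝ)..(2*π), Complex.exp (2*θ*Complex.I) * f (r * Complex.exp (θ*Complex.I)) := by
      have h0 := hper.intervalIntegral_add_eq (-π) 0
      rw [show -π + 2*π = π by ring, zero_add] at h0
      exact h0
    rw [hshift, circle_avg r₀ hr₀ f hdiff hr1 hr2, ← hI₁]
    have hrne : (r:ℂ) ≠ 0 := Complex.ofReal_ne_zero.2 (ne_of_gt hr0)
    rw [Complex.real_smul, Complex.real_smul, Complex.ofReal_inv, ← mul_assoc]
    congr 1
    field_simp
  have hlog : (∫ r in Set.Ioo r₀⁻¹ r₀, r⁻¹) = 2 * Real.log r₀ := by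
    rw [← MeasureTheory.integral_Ioc_eq_integral_Ioo,
      ← intervalIntegral.integral_of_le (le_of_lt (lt_trans (inv_lt_one_of_one_lt₀ hr₀) hr₀)),
      integral_inv_of_pos hinv0 hr₀0, show r₀ / r₀⁻¹ = r₀ * r₀ by field_simp,
      Real.log_mul (ne_of_gt hr₀0) (ne_of_gt hr₀0)]
    ring
  calc ∫ z in A, z ^ 2 / ((‖z‖ : ℂ) ^ 2) * f z ∂volume
      = ∫ z, F z := step1
    _ = ∫ p in polarCoord.target, p.1 • F (Complex.polarCoord.symm p) := step2
    _ = ∫ p in T, p.1 • h (Complex.polarCoord.symm p) := step3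
    _ = ∫ p in T, G p := step4
    _ = ∫ r in Set.Ioo r₀⁻¹ r₀, ∫ θ in Set.Ioo (-π) π, G (r, θ) := step5
    _ = ∫ r in Set.Ioo r₀⁻¹ r₀, (r⁻¹ : ℝ) • I₁ :=
        setIntegral_congr_fun measurableSet_Ioo inner_eq
    _ = (∫ r in Set.Ioo r₀⁻¹ r₀, r⁻¹) • I₁ := integral_smul_const _ _
    _ = ((2 * Real.log r₀ : ℝ)) • I₁ := by rw [hlog]
    _ = (2 * Real.log r₀ : ℝ) * I₁ := by rw [Complex.real_smul]
end

section
/- Let r₀ > 1 and let A(r₀) = {z ∈ ℂ : r₀⁻¹ < |z| < r₀}. Let (fₙ) be a sequence of functions, each holomorphic on A(r₀) and integrable on A(r₀) with respect to planar Lebesgue measure, and suppose fₙ → 0 uniformly on every compact subset of A(r₀). Then ∫_{A(r₀)} (z²/|z|²)·fₙ(z) dA(z) → 0 as n → ∞. (No uniform bound on the L¹ norms of the fₙ is assumed.) -/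
open MeasureTheory Real Complex Filter

/-- If `fₙ` are holomorphic and integrable on the annulus `A(r₀) = {r₀⁻¹ < |z| < r₀}`
and `fₙ → 0` uniformly on every compact subset of the annulus (with no uniform bound on
the `L¹` norms), then `∫_{A(r₀)} (z²/|z|²)·fₙ(z) dA(z) → 0`. -/
theorem stmt7 (r₀ : ℝ) (hr₀ : 1 < r₀)
    (f : ℕ → ℂ → ℂ)
    (hdiff : ∀ n, DifferentiableOn ℂ (f n)
      {z : ℂ | r₀⁻¹ < ‖z‖ ∧ ‖z‖ < r₀})
    (hint : ∀ n, IntegrableOn (f n)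
      {z : ℂ | r₀⁻¹ < ‖z‖ ∧ ‖z‖ < r₀} volume)
    (hconv : ∀ K : Set ℂ, K ⊆ {z : ℂ | r₀⁻¹ < ‖z‖ ∧ ‖z‖ < r₀} →
      IsCompact K → TendstoUniformlyOn f 0 atTop K) :
    Tendsto (fun n => ∫ z in {z : ℂ | r₀⁻¹ < ‖z‖ ∧ ‖z‖ < r₀},
        (z ^ 2 / ((‖z‖ : ℂ) ^ 2)) * f n z ∂volume)
      atTop (nhds 0) := by
  set S : Set ℂ := {z : ℂ | r₀⁻¹ < ‖z‖ ∧ ‖z‖ < r₀} with hSdef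
  have hr₀0 : (0:ℝ) < r₀ := lt_trans one_pos hr₀
  have hr0inv : (0:ℝ) < r₀⁻¹ := by positivity
  have hrinvlt : r₀⁻¹ < 1 := by
    rw [inv_lt_one_iff₀]; right; exact hr₀
  have hS_open : IsOpen S := by
    have : S = (fun z : ℂ => ‖z‖) ⁻¹' (Set.Ioo r₀⁻¹ r₀) := rfl
    rw [this]; exact isOpen_Ioo.preimage continuous_norm
  have hS_meas : MeasurableSet S := hS_open.measurableSet
  set μf : ℂ → ℂ := fun z => z ^ 2 / ((‖z‖ : ℂ) ^ 2) with hμf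
  have hμf_meas : Measurable μf := by
    exact (measurable_id.pow_const 2).div
      ((Complex.measurable_ofReal.comp continuous_norm.measurable).pow_const 2)
  have hμf_bd : ∀ z, ‖μf z‖ ≤ 1 := by
    intro z
    by_cases hz : z = 0
    · simp [hμf, hz]
    · have ha : ‖z‖ ≠ 0 := by simpa using hz
      simp only [hμf, norm_div, norm_pow, Complex.norm_real, norm_norm]
      rw [div_self (pow_ne_zero 2 ha)]
  have hμint : ∀ n, IntegrableOn (fun z => μf z * f n z) S volume := fun n =>
    (hint n).bdd_mul (c := 1) hμf_meas.aestronglyMeasurable (Filter.Eventually.of_forall hμf_bd)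
  set C : ℕ → ℂ := fun n => ∮ z in C(0, 1), z * f n z with hC
  -- the key identity
  set L : ℝ := Real.log (r₀ / r₀⁻¹) with hL
  have key : ∀ n, (∫ z in S, μf z * f n z) = C n * (Complex.I⁻¹ * (L:ℂ)) := by
    intro n
    set g : ℂ → ℂ := fun z => μf z * f n z with hg
    have hFint : Integrable (S.indicator g) volume :=
      (integrable_indicator_iff hS_meas).2 (hμint n)
    set T : Set (ℝ × ℝ) := Set.Ioo r₀⁻¹ r₀ ×ˢ Set.Ioo (-π) π with hT
    have hT_meas : MeasurableSet T := measurableSet_Ioo.prod measurableSet_Ioo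
    have hT_sub : T ⊆ polarCoord.target := by
      rw [polarCoord_target]
      exact Set.prod_mono (fun x hx => lt_trans hr0inv hx.1) subset_rfl
    have habs : ∀ p : ℝ × ℝ, 0 < p.1 →
        ‖Complex.polarCoord.symm p‖ = p.1 := by
      intro p hp
      rw [Complex.norm_polarCoord_symm, abs_of_pos hp]
    -- polar change of variables
    have h1 : (∫ p in polarCoord.target, p.1 • S.indicator g (Complex.polarCoord.symm p))
        = ∫ z in S, g z := by
      rw [Complex.integral_comp_polarCoord_symm, integral_indicator hS_meas]
    have h2 : (∫ p in polarCoord.target, p.1 • S.indicator g (Complex.polarCoord.symm p))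
        = ∫ p in T, p.1 • g (Complex.polarCoord.symm p) := by
      have heq : Set.EqOn (fun p : ℝ × ℝ => p.1 • S.indicator g (Complex.polarCoord.symm p))
          (T.indicator (fun p : ℝ × ℝ => p.1 • g (Complex.polarCoord.symm p)))
          polarCoord.target := by
        intro p hp
        rw [polarCoord_target] at hp
        have hp1 : 0 < p.1 := hp.1
        by_cases hpT : p ∈ T
        · have hmem : Complex.polarCoord.symm p ∈ S := by
            constructor <;> rw [habs p hp1]
            · exact hpT.1.1
            · exact hpT.1.2
          show p.1 • S.indicator g (Complex.polarCoord.symm p) = T.indicator _ p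
          rw [Set.indicator_of_mem hmem, Set.indicator_of_mem hpT]
        · have hnot : Complex.polarCoord.symm p ∉ S := by
            intro hmem
            obtain ⟨hm1, hm2⟩ := hmem
            rw [habs p hp1] at hm1 hm2
            exact hpT ⟨⟨hm1, hm2⟩, hp.2⟩
          show p.1 • S.indicator g (Complex.polarCoord.symm p) = T.indicator _ p
          rw [Set.indicator_of_notMem hnot, Set.indicator_of_notMem hpT, smul_zero]
      rw [setIntegral_congr_fun polarCoord.open_target.measurableSet heq,
        setIntegral_indicator hT_meas, Set.inter_eq_self_of_subset_right hT_sub]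
    -- integrability on T of the polar integrand
    set B : ℝ × ℝ → ℝ × ℝ →L[ℝ] ℝ × ℝ := fun p =>
      LinearMap.toContinuousLinearMap (Matrix.toLin (Module.Basis.finTwoProd ℝ) (Module.Basis.finTwoProd ℝ)
        !![Real.cos p.2, -p.1 * Real.sin p.2; Real.sin p.2, p.1 * Real.cos p.2]) with hB
    have hBderiv : ∀ p ∈ polarCoord.target,
        HasFDerivWithinAt polarCoord.symm (B p) polarCoord.target p := fun p _ =>
      (hasFDerivAt_polarCoord_symm p).hasFDerivWithinAt
    have B_det : ∀ p, (B p).det = p.1 := by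
      intro p
      conv_rhs => rw [← one_mul p.1, ← Real.cos_sq_add_sin_sq p.2]
      simp only [hB, neg_mul, LinearMap.det_toContinuousLinearMap, LinearMap.det_toLin,
        Matrix.det_fin_two_of, sub_neg_eq_add]
      ring
    have hsymm : ∀ p : ℝ × ℝ,
        Complex.measurableEquivRealProd.symm (polarCoord.symm p) = Complex.polarCoord.symm p := by
      intro p
      rw [Complex.measurableEquivRealProd_symm_apply, polarCoord_symm_apply,
        Complex.polarCoord_symm_apply]
      apply Complex.ext <;>
        simp [Complex.cos_ofReal_re, Complex.sin_ofReal_re]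
    have hFint' : Integrable
        (fun q : ℝ × ℝ => S.indicator g (Complex.measurableEquivRealProd.symm q)) volume := by
      exact ((Complex.volume_preserving_equiv_real_prod.symm
          Complex.measurableEquivRealProd).integrable_comp_emb
        Complex.measurableEquivRealProd.symm.measurableEmbedding).2 hFint
    have hInt1 : IntegrableOn
        (fun p : ℝ × ℝ => |(B p).det| •
          S.indicator g (Complex.measurableEquivRealProd.symm (polarCoord.symm p)))
        polarCoord.target volume := by
      refine (integrableOn_image_iff_integrableOn_abs_det_fderiv_smul volume
        polarCoord.open_target.measurableSet hBderiv polarCoord.symm.injOn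
        (fun q => S.indicator g (Complex.measurableEquivRealProd.symm q))).1 ?_
      rw [polarCoord.symm_image_target_eq_source]
      exact hFint'.integrableOn
    have hInt2 : IntegrableOn (fun p : ℝ × ℝ => p.1 • g (Complex.polarCoord.symm p)) T volume := by
      refine (hInt1.mono_set hT_sub).congr_fun ?_ hT_meas
      intro p hp
      have hp1 : 0 < p.1 := lt_trans hr0inv hp.1.1
      have hmem : Complex.polarCoord.symm p ∈ S := by
        constructor <;> rw [habs p hp1]
        · exact hp.1.1
        · exact hp.1.2
      show |(B p).det| • S.indicator g (Complex.measurableEquivRealProd.symm (polarCoord.symm p))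
          = p.1 • g (Complex.polarCoord.symm p)
      rw [B_det p, abs_of_pos hp1, hsymm p, Set.indicator_of_mem hmem]
    -- Fubini
    have h3 : (∫ p in T, p.1 • g (Complex.polarCoord.symm p))
        = ∫ r in Set.Ioo r₀⁻¹ r₀, ∫ θ in Set.Ioo (-π) π,
            r • g (Complex.polarCoord.symm (r, θ)) := by
      rw [hT] at hInt2 ⊢
      rw [Measure.volume_eq_prod] at hInt2 ⊢
      exact setIntegral_prod _ hInt2
    -- inner integral
    have inner : ∀ r ∈ Set.Ioo r₀⁻¹ r₀,
        (∫ θ in Set.Ioo (-π) π, r • g (Complex.polarCoord.symm (r, θ)))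
          = C n * Complex.I⁻¹ * (r:ℂ)⁻¹ := by
      intro r hr
      have hrpos : 0 < r := lt_trans hr0inv hr.1
      have hP : ∀ θ : ℝ, Complex.polarCoord.symm (r, θ) = circleMap 0 r θ := by
        intro θ
        rw [Complex.polarCoord_symm_apply]
        simp [circleMap, Complex.exp_mul_I]
      have hper : Function.Periodic (fun θ : ℝ => r • g (circleMap 0 r θ)) (2 * π) := by
        intro θ
        simp only [(periodic_circleMap 0 r) θ]
      have hcirc : (∮ z in C(0, r), z * f n z)
          = ∫ θ in (0:ℝ)..2 * π,
              (circleMap 0 r θ * Complex.I) * (circleMap 0 r θ * f n (circleMap 0 r θ)) := by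
        simp [circleIntegral, deriv_circleMap, smul_eq_mul]
      have hann : (∮ z in C(0, r), z * f n z) = C n := by
        have hsubann : ∀ {a b : ℝ}, r₀⁻¹ < a → b < r₀ →
            (Metric.closedBall (0:ℂ) b \ Metric.ball 0 a) ⊆ S := by
          intro a b ha hb z hz
          simp only [Set.mem_diff, Metric.mem_closedBall, Metric.mem_ball, dist_zero_right,
            not_lt] at hz
          exact ⟨lt_of_lt_of_le ha hz.2, lt_of_le_of_lt hz.1 hb⟩
        have hcont : ∀ {a b : ℝ}, r₀⁻¹ < a → b < r₀ →
            ContinuousOn (fun z : ℂ => z * f n z) (Metric.closedBall (0:ℂ) b \ Metric.ball 0 a) :=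
          fun ha hb => (continuousOn_id.mul (hdiff n).continuousOn).mono (hsubann ha hb)
        have hd : ∀ {a b : ℝ}, r₀⁻¹ < a → b < r₀ →
            ∀ z ∈ (Metric.ball (0:ℂ) b \ Metric.closedBall 0 a) \ (∅ : Set ℂ),
              DifferentiableAt ℂ (fun z : ℂ => z * f n z) z := by
          intro a b ha hb z hz
          have hzS : z ∈ S := by
            apply hsubann ha hb
            rw [Set.diff_empty] at hz
            exact ⟨Metric.ball_subset_closedBall hz.1, fun h => hz.2 (Metric.ball_subset_closedBall h)⟩
          exact differentiableAt_id.mul ((hdiff n).differentiableAt (hS_open.mem_nhds hzS))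
        rcases le_total r 1 with h | h
        · exact (circleIntegral_eq_of_differentiable_on_annulus_off_countable hrpos h
            Set.countable_empty (hcont hr.1 hr₀) (hd hr.1 hr₀)).symm
        · exact circleIntegral_eq_of_differentiable_on_annulus_off_countable one_pos h
            Set.countable_empty (hcont hrinvlt hr.2) (hd hrinvlt hr.2)
      calc (∫ θ in Set.Ioo (-π) π, r • g (Complex.polarCoord.symm (r, θ)))
          = ∫ θ in Set.Ioo (-π) π, r • g (circleMap 0 r θ) := by
            simp only [hP]
        _ = ∫ θ in (-π)..π, r • g (circleMap 0 r θ) := by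
            rw [intervalIntegral.integral_of_le (by linarith [Real.pi_pos]),
              integral_Ioc_eq_integral_Ioo]
        _ = ∫ θ in (0:ℝ)..2 * π, r • g (circleMap 0 r θ) := by
            have := hper.intervalIntegral_add_eq (-π) 0
            rw [show -π + 2 * π = π by ring, zero_add] at this
            exact this
        _ = ∫ θ in (0:ℝ)..2 * π, (Complex.I * r)⁻¹ *
              ((circleMap 0 r θ * Complex.I) * (circleMap 0 r θ * f n (circleMap 0 r θ))) := by
            apply intervalIntegral.integral_congr
            intro θ _
            have hz : (‖circleMap 0 r θ‖ : ℂ) = (r : ℂ) := by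
              rw [norm_circleMap_zero, abs_of_pos hrpos]
            simp only [hg, hμf, real_smul, hz]
            have hI : Complex.I ≠ 0 := Complex.I_ne_zero
            have hrne : (r : ℂ) ≠ 0 := Complex.ofReal_ne_zero.2 hrpos.ne'
            field_simp
        _ = (Complex.I * r)⁻¹ * ∮ z in C(0, r), z * f n z := by
            rw [intervalIntegral.integral_const_mul, hcirc]
        _ = C n * Complex.I⁻¹ * (r:ℂ)⁻¹ := by
            rw [hann, mul_inv]
            ring
    -- outer integral
    have h4 : (∫ r in Set.Ioo r₀⁻¹ r₀, ∫ θ in Set.Ioo (-π) π,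
          r • g (Complex.polarCoord.symm (r, θ)))
        = ∫ r in Set.Ioo r₀⁻¹ r₀, C n * Complex.I⁻¹ * (r:ℂ)⁻¹ := by
      exact setIntegral_congr_fun measurableSet_Ioo fun r hr => inner r hr
    have h5 : (∫ r in Set.Ioo r₀⁻¹ r₀, C n * Complex.I⁻¹ * (r:ℂ)⁻¹)
        = C n * (Complex.I⁻¹ * (L:ℂ)) := by
      rw [show (fun r : ℝ => C n * Complex.I⁻¹ * (r:ℂ)⁻¹)
          = fun r : ℝ => (C n * Complex.I⁻¹) * ((r⁻¹ : ℝ) : ℂ) by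
        funext r; rw [Complex.ofReal_inv]]
      rw [integral_const_mul]
      have hoR : (∫ a in Set.Ioo r₀⁻¹ r₀, ((a⁻¹ : ℝ) : ℂ))
          = ((∫ a in Set.Ioo r₀⁻¹ r₀, a⁻¹ : ℝ) : ℂ) := integral_ofReal
      rw [hoR]
      have : (∫ r in Set.Ioo r₀⁻¹ r₀, r⁻¹) = L := by
        rw [← integral_Ioc_eq_integral_Ioo,
          ← intervalIntegral.integral_of_le (le_of_lt (lt_trans hrinvlt hr₀)), hL]
        exact integral_inv (Set.notMem_uIcc_of_lt hr0inv hr₀0)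
      rw [this, mul_assoc]
    rw [← h1, h2, h3, h4, h5]
  -- convergence of the circle integrals
  have hC0 : Tendsto C atTop (nhds 0) := by
    rw [NormedAddCommGroup.tendsto_nhds_zero]
    intro ε hε
    have hsub : Metric.sphere (0:ℂ) 1 ⊆ S := by
      intro z hz
      rw [mem_sphere_zero_iff_norm] at hz
      have habs1 : ‖z‖ = 1 := hz
      exact ⟨by rw [habs1]; exact hrinvlt, by rw [habs1]; exact hr₀⟩
    have huc := hconv (Metric.sphere 0 1) hsub (isCompact_sphere 0 1)
    rw [Metric.tendstoUniformlyOn_iff] at huc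
    have hδ : (0:ℝ) < ε / (2 * π + 1) := by positivity
    filter_upwards [huc (ε / (2 * π + 1)) hδ] with n hn
    have hbound : ∀ z ∈ Metric.sphere (0:ℂ) 1, ‖z * f n z‖ ≤ ε / (2 * π + 1) := by
      intro z hz
      have h1 : ‖z‖ = 1 := mem_sphere_zero_iff_norm.1 hz
      have h2 := hn z hz
      rw [Pi.zero_apply, dist_comm, dist_zero_right] at h2
      rw [norm_mul, h1, one_mul]
      exact le_of_lt h2
    have := circleIntegral.norm_integral_le_of_norm_le_const zero_le_one hbound
    refine lt_of_le_of_lt this ?_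
    rw [mul_one]
    have h3 : ε / (2 * π + 1) * (2 * π) < ε / (2 * π + 1) * (2 * π + 1) := by
      apply mul_lt_mul_of_pos_left (by linarith) hδ
    rw [div_mul_cancel₀ ε (by positivity : (2 * π + 1) ≠ 0)] at h3
    linarith [h3]
  have := hC0.mul_const (Complex.I⁻¹ * (L:ℂ))
  rw [zero_mul] at this
  refine Tendsto.congr (fun n => (key n).symm) this
end

section
/- Let U ⊆ ℂ be a nonempty connected open set, and let φ, ψ : U → ℂ be holomorphic and integrable on U with respect to planar Lebesgue measure. Define h : U → ℂ by h(z) = |φ(z)|·ψ(z)/φ(z) when φ(z) ≠ 0 and h(z) = 0 when φ(z) = 0. Suppose ∫_U |φ| dA = 1, ∫_U |ψ| dA ≤ 1, and ∫_U h dA = 1. Then ψ(z) = φ(z) for every z ∈ U. -/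
open MeasureTheory Complex

private lemma complex_eq_re_of_abs_eq_re {z : ℂ} (hz : ‖z‖ = z.re) :
    z = (z.re : ℂ) := by
  have h1 : (‖z‖) ^ 2 = z.re ^ 2 + z.im ^ 2 := by
    rw [Complex.sq_norm, Complex.normSq_apply]; ring
  have h2 : z.im = 0 := by
    rw [hz] at h1; nlinarith [sq_nonneg z.im]
  exact Complex.ext (by simp) (by simp [h2])

private lemma not_open_subset_real {s : Set ℂ} (hs : IsOpen s) (hne : s.Nonempty)
    (hsub : s ⊆ Set.range (Complex.ofReal)) : False := by
  obtain ⟨x, hx⟩ := hne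
  obtain ⟨ε, hε, hball⟩ := Metric.isOpen_iff.1 hs x hx
  have hmem : x + (ε / 2) * Complex.I ∈ Metric.ball x ε := by
    simp only [Metric.mem_ball, dist_eq_norm]
    have : ‖x + (ε / 2) * Complex.I - x‖ = ε / 2 := by
      simp [abs_of_pos hε, abs_of_pos (half_pos hε)]
    rw [this]; linarith
  obtain ⟨r, hr⟩ := hsub (hball hmem)
  have him : (x + (ε / 2) * Complex.I).im = x.im + ε / 2 := by simp
  have hxim : ((r : ℂ)).im = 0 := by simp
  rw [hr] at hxim
  obtain ⟨r', hr'⟩ := hsub hx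
  have : x.im = 0 := by rw [← hr']; simp
  rw [him, this] at hxim; linarith

/-- Extremal uniqueness: if `φ, ψ` are holomorphic and integrable on a nonempty
connected open set `U ⊆ ℂ`, `∫_U |φ| = 1`, `∫_U |ψ| ≤ 1`, and the pairing
`∫_U (|φ|/φ)·ψ` equals `1` (where the integrand is taken to be `0` at zeros of `φ`),
then `ψ = φ` on `U`. -/
theorem stmt8 (U : Set ℂ) (hU : U.Nonempty) (hUopen : IsOpen U)
    (hUconn : IsConnected U)
    (φ ψ : ℂ → ℂ)
    (hφdiff : DifferentiableOn ℂ φ U) (hψdiff : DifferentiableOn ℂ ψ U)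
    (hφint : IntegrableOn φ U volume) (hψint : IntegrableOn ψ U volume)
    (h : ℂ → ℂ)
    (hdef : ∀ z, h z = if φ z = 0 then 0 else ((‖φ z‖ : ℝ) : ℂ) * ψ z / φ z)
    (hφnorm : ∫ z in U, ‖φ z‖ ∂volume = 1)
    (hψnorm : ∫ z in U, ‖ψ z‖ ∂volume ≤ 1)
    (hpair : ∫ z in U, h z ∂volume = 1) :
    ∀ z ∈ U, ψ z = φ z := by
  have hUm : MeasurableSet U := hUopen.measurableSet
  have hdef' : ∀ z, h z = ((‖φ z‖ : ℝ) : ℂ) * ψ z / φ z := by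
    intro z; rw [hdef]; split_ifs with hz
    · simp [hz]
    · rfl
  have hφc : ContinuousOn φ U := hφdiff.continuousOn
  have hψc : ContinuousOn ψ U := hψdiff.continuousOn
  -- measurability and integrability of h
  have hφm : AEStronglyMeasurable φ (volume.restrict U) := hφc.aestronglyMeasurable hUm
  have hψm : AEStronglyMeasurable ψ (volume.restrict U) := hψc.aestronglyMeasurable hUm
  have hhm : AEStronglyMeasurable h (volume.restrict U) := by
    have : AEStronglyMeasurable (fun z => ((‖φ z‖ : ℝ) : ℂ) * ψ z / φ z)
        (volume.restrict U) := by
      exact ((((Complex.continuous_ofReal.measurable.comp_aemeasurable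
        (continuous_norm.measurable.comp_aemeasurable hφm.aemeasurable)).mul
        hψm.aemeasurable).mul hφm.aemeasurable.inv).aestronglyMeasurable)
    exact this.congr (Filter.Eventually.of_forall fun z => ((hdef' z).trans (div_eq_mul_inv _ _)).symm)
  have habs : ∀ z, ‖h z‖ ≤ ‖ψ z‖ := by
    intro z
    rw [hdef']
    by_cases hz : φ z = 0
    · simp [hz]
    · have : ‖((‖φ z‖ : ℝ) : ℂ) * ψ z / φ z‖ = ‖ψ z‖ := by
        rw [norm_div, norm_mul, Complex.norm_of_nonneg (norm_nonneg _),
          mul_comm, mul_div_assoc, div_self (norm_ne_zero_iff.mpr hz), mul_one]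
      rw [this]
  have hhint : IntegrableOn h U volume := by
    refine Integrable.mono hψint hhm ?_
    exact Filter.Eventually.of_forall fun z => by
      simpa using habs z
  -- the nonnegative defect function
  have hreint : IntegrableOn (fun z => (h z).re) U volume := hhint.re
  have habsψint : IntegrableOn (fun z => ‖ψ z‖) U volume := by
    exact hψint.norm
  have hre_integral : ∫ z in U, (h z).re ∂volume = 1 := by
    have := integral_re hhint
    rw [hpair] at this
    simpa using this
  have hfint : IntegrableOn (fun z => ‖ψ z‖ - (h z).re) U volume :=
    habsψint.sub hreint
  have hf_nonneg : ∀ z, 0 ≤ ‖ψ z‖ - (h z).re := fun z =>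
    sub_nonneg.2 ((Complex.re_le_norm (h z)).trans (habs z))
  have hf_integral_le : ∫ z in U, (‖ψ z‖ - (h z).re) ∂volume ≤ 0 := by
    rw [integral_sub habsψint hreint, hre_integral]
    linarith
  have hf_integral_eq : ∫ z in U, (‖ψ z‖ - (h z).re) ∂volume = 0 :=
    le_antisymm hf_integral_le (integral_nonneg fun z => hf_nonneg z)
  have hf_ae : (fun z => ‖ψ z‖ - (h z).re) =ᵐ[volume.restrict U] 0 := by
    exact (integral_eq_zero_iff_of_nonneg_ae
      (Filter.Eventually.of_forall fun z => hf_nonneg z) hfint).1 hf_integral_eq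
  -- a.e., h z = |ψ z|
  have hae : (fun z => ((‖φ z‖ : ℝ) : ℂ) * ψ z) =ᵐ[volume.restrict U]
      (fun z => ((‖ψ z‖ : ℝ) : ℂ) * φ z) := by
    filter_upwards [hf_ae] with z hz
    have hre : (h z).re = ‖ψ z‖ := by
      have := congrArg id hz; simp only [Pi.zero_apply, id] at hz; linarith
    have habs_eq : ‖h z‖ = (h z).re := by
      refine le_antisymm ?_ (Complex.re_le_norm _)
      rw [hre]; exact habs z
    have hz' : h z = ((‖ψ z‖ : ℝ) : ℂ) := by
      rw [complex_eq_re_of_abs_eq_re habs_eq, hre]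
    by_cases hφz : φ z = 0
    · have : h z = 0 := by rw [hdef']; simp [hφz]
      rw [this] at hz'
      have : ‖ψ z‖ = 0 := by exact_mod_cast hz'.symm
      have hψz : ψ z = 0 := by simpa using this
      simp [hφz, hψz]
    · have := hz'
      rw [hdef', div_eq_iff hφz] at this
      rw [this]
  -- upgrade to everywhere on U by continuity
  have heq : Set.EqOn (fun z => ((‖φ z‖ : ℝ) : ℂ) * ψ z)
      (fun z => ((‖ψ z‖ : ℝ) : ℂ) * φ z) U := by
    refine Measure.eqOn_of_ae_eq hae ?_ ?_ ?_
    · exact (Complex.continuous_ofReal.comp_continuousOn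
        (continuous_norm.comp_continuousOn hφc)).mul hψc
    · exact (Complex.continuous_ofReal.comp_continuousOn
        (continuous_norm.comp_continuousOn hψc)).mul hφc
    · rw [hUopen.interior_eq]; exact subset_closure
  -- φ is not identically zero
  have hz₀ : ∃ z₀ ∈ U, φ z₀ ≠ 0 := by
    by_contra hcon
    push_neg at hcon
    have : ∫ z in U, ‖φ z‖ ∂volume = 0 := by
      rw [setIntegral_congr_fun hUm (g := fun _ => (0 : ℝ)) (fun z hz => by simp [hcon z hz])]
      simp
    rw [hφnorm] at this; norm_num at this
  obtain ⟨z₀, hz₀U, hz₀φ⟩ := hz₀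
  -- open set where φ ≠ 0
  have hVopen : IsOpen (U ∩ φ ⁻¹' {0}ᶜ) :=
    hφc.isOpen_inter_preimage hUopen isOpen_compl_singleton
  have hz₀V : z₀ ∈ U ∩ φ ⁻¹' {0}ᶜ := ⟨hz₀U, by simpa using hz₀φ⟩
  obtain ⟨r, hr, hball⟩ := Metric.isOpen_iff.1 hVopen z₀ hz₀V
  set B := Metric.ball z₀ r with hB
  have hBU : B ⊆ U := fun z hz => (hball hz).1
  have hBφ : ∀ z ∈ B, φ z ≠ 0 := fun z hz => by
    have := (hball hz).2; simpa using this
  -- q = ψ / φ is analytic on B and real-valued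
  have hq : AnalyticOnNhd ℂ (fun z => ψ z / φ z) B := by
    have h1 : DifferentiableOn ℂ (fun z => ψ z / φ z) B :=
      (hψdiff.mono hBU).div (hφdiff.mono hBU) hBφ
    exact h1.analyticOnNhd Metric.isOpen_ball
  have hqreal : ∀ z ∈ B, ψ z / φ z = ((‖ψ z‖ / ‖φ z‖ : ℝ) : ℂ) := by
    intro z hz
    have := heq (hBU hz)
    simp only at this
    have hφz := hBφ z hz
    have habsφ : ((‖φ z‖ : ℝ) : ℂ) ≠ 0 := by
      simpa using hφz
    rw [Complex.ofReal_div, div_eq_div_iff hφz habsφ]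
    linear_combination this
  -- open mapping: q is constant on B
  obtain ⟨w, hw⟩ : ∃ w, ∀ z ∈ B, ψ z / φ z = w := by
    rcases hq.is_constant_or_isOpen ((convex_ball z₀ r).isPreconnected) with hc | ho
    · exact hc
    · exfalso
      refine not_open_subset_real (ho B Set.Subset.rfl Metric.isOpen_ball) ?_ ?_
      · exact ⟨ψ z₀ / φ z₀, ⟨z₀, Metric.mem_ball_self hr, rfl⟩⟩
      · rintro x ⟨z, hz, rfl⟩
        exact ⟨_, (hqreal z hz).symm⟩
  -- so ψ = w * φ on B, hence on U by analytic continuation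
  have hψφB : ∀ z ∈ B, ψ z - w * φ z = 0 := by
    intro z hz
    have := hw z hz
    rw [div_eq_iff (hBφ z hz)] at this
    rw [this]; ring
  have hψφU : ∀ z ∈ U, ψ z = w * φ z := by
    have hF : AnalyticOnNhd ℂ (fun z => ψ z - w * φ z) U :=
      ((hψdiff.sub (hφdiff.const_mul w)).analyticOnNhd hUopen)
    have hzero : Set.EqOn (fun z => ψ z - w * φ z) 0 U := by
      refine hF.eqOn_zero_of_preconnected_of_eventuallyEq_zero hUconn.isPreconnected hz₀U ?_
      filter_upwards [Metric.ball_mem_nhds z₀ hr] with z hz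
      exact hψφB z hz
    intro z hz
    have := hzero hz
    simp only [Pi.zero_apply] at this
    exact sub_eq_zero.1 this
  -- compute the pairing to find w = 1
  have hhval : Set.EqOn h (fun z => w * ((‖φ z‖ : ℝ) : ℂ)) U := by
    intro z hz
    rw [hdef', hψφU z hz]
    by_cases hφz : φ z = 0
    · simp [hφz]
    · field_simp
  have hint : ∫ z in U, h z ∂volume = w := by
    have hcast : ∫ a in U, ((‖φ a‖) : ℂ) ∂volume
        = ((∫ a in U, ‖φ a‖ ∂volume : ℝ) : ℂ) := integral_ofReal
    rw [setIntegral_congr_fun hUm hhval, integral_const_mul, hcast, hφnorm]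
    simp
  have hw1 : w = 1 := by rw [hpair] at hint; exact hint.symm
  intro z hz
  rw [hψφU z hz, hw1, one_mul]
end

section
/- Fix δ₀ ∈ (0,1) and real numbers ζ, λ with −1+δ₀ ≤ ζ < λ ≤ 1−δ₀, and let r ≥ 0. Then the Schwarz–Christoffel integrand h_r(x) = √(x−ζ+r)/(√(x+1)·√(x−ζ)·√(x−λ)·√(x−1)) is integrable on (1, ∞), the total integral J(r) = ∫₁^∞ h_r(x) dx satisfies 0 < J(0), and J(0) ≤ J(r) ≤ (1 + r/(2δ₀))·J(0). -/
open MeasureTheory Real Set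


lemma sc_den_pos {δ₀ ζ lam : ℝ} (hδ₀ : 0 < δ₀) (hζ : -1 + δ₀ ≤ ζ) (hζlam : ζ < lam)
    (hlam : lam ≤ 1 - δ₀) {x : ℝ} (hx : 1 < x) :
    0 < Real.sqrt (x + 1) * Real.sqrt (x - ζ) * Real.sqrt (x - lam) * Real.sqrt (x - 1) := by
  have h1 : 0 < x + 1 := by linarith
  have h2 : 0 < x - ζ := by linarith
  have h3 : 0 < x - lam := by linarith
  have h4 : 0 < x - 1 := by linarith
  exact mul_pos (mul_pos (mul_pos (Real.sqrt_pos.mpr h1) (Real.sqrt_pos.mpr h2))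
    (Real.sqrt_pos.mpr h3)) (Real.sqrt_pos.mpr h4)

lemma sc_integrable {δ₀ ζ lam : ℝ} (hδ₀ : 0 < δ₀) (hζ : -1 + δ₀ ≤ ζ) (hζlam : ζ < lam)
    (hlam : lam ≤ 1 - δ₀) {s : ℝ} (hs : 0 ≤ s) :
    IntegrableOn (fun x : ℝ => Real.sqrt (x - ζ + s) /
        (Real.sqrt (x + 1) * Real.sqrt (x - ζ) * Real.sqrt (x - lam) *
          Real.sqrt (x - 1))) (Ioi 1) volume := by
  set f : ℝ → ℝ := fun x => Real.sqrt (x - ζ + s) /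
        (Real.sqrt (x + 1) * Real.sqrt (x - ζ) * Real.sqrt (x - lam) *
          Real.sqrt (x - 1)) with hfdef
  have hcont : ContinuousOn f (Ioi 1) := by
    apply ContinuousOn.div
    · fun_prop
    · fun_prop
    · exact fun x hx => ne_of_gt (sc_den_pos hδ₀ hζ hζlam hlam hx)
  have hmeas : AEStronglyMeasurable f (volume.restrict (Ioi 1)) :=
    hcont.aestronglyMeasurable measurableSet_Ioi
  have hnum : ∀ x : ℝ, 1 < x → Real.sqrt (x - ζ + s) ≤ Real.sqrt (x + 1) * Real.sqrt (1 + s) := by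
    intro x hx
    rw [← Real.sqrt_mul (by linarith)]
    apply Real.sqrt_le_sqrt
    nlinarith
  have hbnd : ∀ x : ℝ, 1 < x →
      f x ≤ Real.sqrt (1 + s) / (Real.sqrt (x - ζ) * Real.sqrt (x - lam) * Real.sqrt (x - 1)) := by
    intro x hx
    have h1 : 0 < x + 1 := by linarith
    have h2 : 0 < x - ζ := by linarith
    have h3 : 0 < x - lam := by linarith
    have h4 : 0 < x - 1 := by linarith
    have hA : 0 < Real.sqrt (x - ζ) * Real.sqrt (x - lam) * Real.sqrt (x - 1) :=
      mul_pos (mul_pos (Real.sqrt_pos.mpr h2) (Real.sqrt_pos.mpr h3)) (Real.sqrt_pos.mpr h4)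
    have h1' : 0 < Real.sqrt (x + 1) := Real.sqrt_pos.mpr h1
    show Real.sqrt (x - ζ + s) /
        (Real.sqrt (x + 1) * Real.sqrt (x - ζ) * Real.sqrt (x - lam) * Real.sqrt (x - 1))
        ≤ Real.sqrt (1 + s) / (Real.sqrt (x - ζ) * Real.sqrt (x - lam) * Real.sqrt (x - 1))
    rw [show Real.sqrt (x + 1) * Real.sqrt (x - ζ) * Real.sqrt (x - lam) * Real.sqrt (x - 1)
        = Real.sqrt (x + 1) * (Real.sqrt (x - ζ) * Real.sqrt (x - lam) * Real.sqrt (x - 1)) by ring,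
      div_le_div_iff₀ (by positivity) hA]
    calc Real.sqrt (x - ζ + s) * (Real.sqrt (x - ζ) * Real.sqrt (x - lam) * Real.sqrt (x - 1))
        ≤ (Real.sqrt (x + 1) * Real.sqrt (1 + s)) *
            (Real.sqrt (x - ζ) * Real.sqrt (x - lam) * Real.sqrt (x - 1)) :=
          mul_le_mul_of_nonneg_right (hnum x hx) (le_of_lt hA)
      _ = Real.sqrt (1 + s) * (Real.sqrt (x + 1) * (Real.sqrt (x - ζ) * Real.sqrt (x - lam) * Real.sqrt (x - 1))) := by ring
  have hnn : ∀ x : ℝ, 0 ≤ f x := by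
    intro x; rw [hfdef]; positivity
  rw [show Ioi (1:ℝ) = Ioc 1 2 ∪ Ioi 2 from (Ioc_union_Ioi_eq_Ioi (by norm_num)).symm]
  apply IntegrableOn.union
  · -- on Ioc 1 2 : dominate by C (x-1)^(-1/2)
    have hg : IntegrableOn (fun x : ℝ => Real.sqrt (1 + s) / δ₀ * (x - 1) ^ (-(1/2) : ℝ)) (Ioc 1 2) volume := by
      apply Integrable.const_mul
      have h := (intervalIntegral.intervalIntegrable_rpow' (a := 0) (b := 1)
        (r := (-(1/2) : ℝ)) (by norm_num)).comp_sub_right 1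
      rw [intervalIntegrable_iff_integrableOn_Ioc_of_le (by norm_num)] at h
      norm_num at h ⊢
      exact h
    apply Integrable.mono' hg (hmeas.mono_set (fun x hx => hx.1))
    rw [ae_restrict_iff' measurableSet_Ioc]
    filter_upwards with x hx
    have hx1 : 1 < x := hx.1
    have h2 : 0 < x - ζ := by linarith
    have h3 : 0 < x - lam := by linarith
    have h4 : 0 < x - 1 := by linarith
    rw [Real.norm_eq_abs, abs_of_nonneg (hnn x)]
    have hδζ : Real.sqrt δ₀ ≤ Real.sqrt (x - ζ) := Real.sqrt_le_sqrt (by linarith)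
    have hδl : Real.sqrt δ₀ ≤ Real.sqrt (x - lam) := Real.sqrt_le_sqrt (by linarith)
    have hAδ : δ₀ * Real.sqrt (x - 1) ≤ Real.sqrt (x - ζ) * Real.sqrt (x - lam) * Real.sqrt (x - 1) := by
      rw [show δ₀ = Real.sqrt δ₀ * Real.sqrt δ₀ from (Real.mul_self_sqrt hδ₀.le).symm]
      exact mul_le_mul_of_nonneg_right
        (mul_le_mul hδζ hδl (Real.sqrt_nonneg _) (Real.sqrt_nonneg _)) (Real.sqrt_nonneg _)
    calc f x ≤ Real.sqrt (1 + s) / (Real.sqrt (x - ζ) * Real.sqrt (x - lam) * Real.sqrt (x - 1)) :=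
          hbnd x hx1
      _ ≤ Real.sqrt (1 + s) / (δ₀ * Real.sqrt (x - 1)) :=
          div_le_div_of_nonneg_left (Real.sqrt_nonneg _) (by positivity) hAδ
      _ = Real.sqrt (1 + s) / δ₀ * (x - 1) ^ (-(1/2) : ℝ) := by
          rw [Real.rpow_neg h4.le, ← Real.sqrt_eq_rpow, ← div_eq_mul_inv, div_div]
  · -- on Ioi 2 : dominate by C x^(-3/2)
    have hg : IntegrableOn (fun x : ℝ => Real.sqrt (1 + s) * (2 * Real.sqrt 2) * x ^ (-(3/2) : ℝ)) (Ioi 2) volume :=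
      (integrableOn_Ioi_rpow_of_lt (by norm_num) (by norm_num)).const_mul _
    apply Integrable.mono' hg (hmeas.mono_set (fun x hx => by
      simp only [mem_Ioi] at *; linarith))
    rw [ae_restrict_iff' measurableSet_Ioi]
    filter_upwards with x hx
    simp only [mem_Ioi] at hx
    have hx1 : 1 < x := by linarith
    have h2 : 0 < x - ζ := by linarith
    have h3 : 0 < x - lam := by linarith
    have h4 : 0 < x - 1 := by linarith
    have hx0 : 0 < x := by linarith
    rw [Real.norm_eq_abs, abs_of_nonneg (hnn x)]
    have key : x ^ (-(3/2) : ℝ) = (x * Real.sqrt x)⁻¹ := by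
      rw [Real.rpow_neg hx0.le]
      congr 1
      rw [show ((3:ℝ)/2) = 1 + 1/2 by norm_num, Real.rpow_add hx0, Real.rpow_one,
        ← Real.sqrt_eq_rpow]
    have hb1 : Real.sqrt (x - 1) ≤ Real.sqrt (x - ζ) := Real.sqrt_le_sqrt (by linarith)
    have hb2 : Real.sqrt (x - 1) ≤ Real.sqrt (x - lam) := Real.sqrt_le_sqrt (by linarith)
    have hA : (x - 1) * Real.sqrt (x - 1) ≤ Real.sqrt (x - ζ) * Real.sqrt (x - lam) * Real.sqrt (x - 1) := by
      rw [show (x - 1) = Real.sqrt (x - 1) * Real.sqrt (x - 1) from (Real.mul_self_sqrt h4.le).symm]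
      exact mul_le_mul_of_nonneg_right
        (mul_le_mul hb1 hb2 (Real.sqrt_nonneg _) (Real.sqrt_nonneg _)) (Real.sqrt_nonneg _)
    have hhalf : x / 2 ≤ x - 1 := by linarith
    have hB : x * Real.sqrt x / (2 * Real.sqrt 2) ≤ (x - 1) * Real.sqrt (x - 1) := by
      have h1 : Real.sqrt (x / 2) = Real.sqrt x / Real.sqrt 2 := Real.sqrt_div hx0.le 2
      have h2' : Real.sqrt (x / 2) ≤ Real.sqrt (x - 1) := Real.sqrt_le_sqrt hhalf
      have heq : x * Real.sqrt x / (2 * Real.sqrt 2) = (x / 2) * Real.sqrt (x / 2) := by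
        rw [h1]; ring
      rw [heq]
      exact mul_le_mul hhalf h2' (Real.sqrt_nonneg _) h4.le
    calc f x ≤ Real.sqrt (1 + s) / (Real.sqrt (x - ζ) * Real.sqrt (x - lam) * Real.sqrt (x - 1)) :=
          hbnd x hx1
      _ ≤ Real.sqrt (1 + s) / (x * Real.sqrt x / (2 * Real.sqrt 2)) :=
          div_le_div_of_nonneg_left (Real.sqrt_nonneg _) (by positivity) (le_trans hB hA)
      _ = Real.sqrt (1 + s) * (2 * Real.sqrt 2) * x ^ (-(3/2) : ℝ) := by
          rw [key]
          have : Real.sqrt x ≠ 0 := ne_of_gt (Real.sqrt_pos.mpr hx0)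
          field_simp

/-- Estimates for the Schwarz–Christoffel normalization constants: with
`h_r(x) = √(x−ζ+r)/(√(x+1)·√(x−ζ)·√(x−λ)·√(x−1))` for `x > 1` and
`J(r) = ∫₁^∞ h_r`, uniformly for `−1+δ₀ ≤ ζ < λ ≤ 1−δ₀`, the integrand is
integrable, `0 < J(0)`, and `J(0) ≤ J(r) ≤ (1 + r/(2δ₀))·J(0)`. -/
theorem stmt10 (δ₀ ζ lam r : ℝ) (hδ₀ : 0 < δ₀) (hδ₁ : δ₀ < 1)
    (hζ : -1 + δ₀ ≤ ζ) (hζlam : ζ < lam) (hlam : lam ≤ 1 - δ₀) (hr : 0 ≤ r) :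
    IntegrableOn (fun x : ℝ => Real.sqrt (x - ζ + r) /
        (Real.sqrt (x + 1) * Real.sqrt (x - ζ) * Real.sqrt (x - lam) *
          Real.sqrt (x - 1))) (Ioi 1) volume ∧
    0 < (∫ x in Ioi (1 : ℝ), Real.sqrt (x - ζ + 0) /
        (Real.sqrt (x + 1) * Real.sqrt (x - ζ) * Real.sqrt (x - lam) *
          Real.sqrt (x - 1))) ∧
    (∫ x in Ioi (1 : ℝ), Real.sqrt (x - ζ + 0) /
        (Real.sqrt (x + 1) * Real.sqrt (x - ζ) * Real.sqrt (x - lam) *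
          Real.sqrt (x - 1)))
      ≤ (∫ x in Ioi (1 : ℝ), Real.sqrt (x - ζ + r) /
        (Real.sqrt (x + 1) * Real.sqrt (x - ζ) * Real.sqrt (x - lam) *
          Real.sqrt (x - 1))) ∧
    (∫ x in Ioi (1 : ℝ), Real.sqrt (x - ζ + r) /
        (Real.sqrt (x + 1) * Real.sqrt (x - ζ) * Real.sqrt (x - lam) *
          Real.sqrt (x - 1)))
      ≤ (1 + r / (2 * δ₀)) *
        (∫ x in Ioi (1 : ℝ), Real.sqrt (x - ζ + 0) /
        (Real.sqrt (x + 1) * Real.sqrt (x - ζ) * Real.sqrt (x - lam) *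
          Real.sqrt (x - 1))) := by
  have hintr := sc_integrable hδ₀ hζ hζlam hlam hr
  have hint0 := sc_integrable hδ₀ hζ hζlam hlam (le_refl (0:ℝ))
  have hpos0 : ∀ x ∈ Ioi (1:ℝ), 0 < Real.sqrt (x - ζ + 0) /
      (Real.sqrt (x + 1) * Real.sqrt (x - ζ) * Real.sqrt (x - lam) * Real.sqrt (x - 1)) := by
    intro x hx
    have hx1 : (1:ℝ) < x := hx
    have h2 : 0 < x - ζ + 0 := by linarith
    exact div_pos (Real.sqrt_pos.mpr h2) (sc_den_pos hδ₀ hζ hζlam hlam hx1)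
  refine ⟨hintr, ?_, ?_, ?_⟩
  · -- positivity of J(0)
    have hnn : (0 : ℝ → ℝ) ≤ᶠ[ae (volume.restrict (Ioi 1))] fun x => Real.sqrt (x - ζ + 0) /
        (Real.sqrt (x + 1) * Real.sqrt (x - ζ) * Real.sqrt (x - lam) * Real.sqrt (x - 1)) := by
      rw [Filter.EventuallyLE, ae_restrict_iff' measurableSet_Ioi]
      filter_upwards with x hx
      exact (hpos0 x hx).le
    rw [setIntegral_pos_iff_support_of_nonneg_ae hnn hint0]
    have hsub : Ioi (1:ℝ) ⊆ (Function.support fun x => Real.sqrt (x - ζ + 0) /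
        (Real.sqrt (x + 1) * Real.sqrt (x - ζ) * Real.sqrt (x - lam) * Real.sqrt (x - 1))) ∩ Ioi 1 :=
      fun x hx => ⟨ne_of_gt (hpos0 x hx), hx⟩
    calc (0 : ENNReal) < volume (Ioi (1:ℝ)) := by simp [Real.volume_Ioi]
      _ ≤ _ := measure_mono hsub
  · -- J(0) ≤ J(r)
    apply setIntegral_mono_on hint0 hintr measurableSet_Ioi
    intro x hx
    have hx1 : (1:ℝ) < x := hx
    have hden := sc_den_pos hδ₀ hζ hζlam hlam hx1
    gcongr
  · -- J(r) ≤ (1 + r/(2δ₀)) J(0)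
    rw [← MeasureTheory.integral_const_mul]
    apply setIntegral_mono_on hintr (hint0.const_mul _) measurableSet_Ioi
    intro x hx
    have hx1 : (1:ℝ) < x := hx
    have hden := sc_den_pos hδ₀ hζ hζlam hlam hx1
    have h2 : δ₀ ≤ x - ζ := by linarith
    have h2' : 0 < x - ζ := by linarith
    have hc : (0:ℝ) ≤ 1 + r / (2 * δ₀) := by positivity
    have hnum : Real.sqrt (x - ζ + r) ≤ (1 + r / (2 * δ₀)) * Real.sqrt (x - ζ + 0) := by
      rw [show (1 + r / (2 * δ₀)) * Real.sqrt (x - ζ + 0)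
          = Real.sqrt ((1 + r / (2 * δ₀))^2 * (x - ζ + 0)) by
        rw [Real.sqrt_mul (by positivity), Real.sqrt_sq hc]]
      apply Real.sqrt_le_sqrt
      have hδ' : (0:ℝ) < 2 * δ₀ := by linarith
      have expand : (1 + r / (2 * δ₀))^2 * (x - ζ + 0)
          = (x - ζ) + (r / δ₀) * (x - ζ) + (r / (2*δ₀))^2 * (x - ζ) := by
        field_simp
        ring
      rw [expand]
      have : r ≤ (r / δ₀) * (x - ζ) := by
        rw [div_mul_eq_mul_div, le_div_iff₀ hδ₀]
        nlinarith
      nlinarith [sq_nonneg (r / (2*δ₀)), mul_nonneg (sq_nonneg (r / (2*δ₀))) h2'.le]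
    calc Real.sqrt (x - ζ + r) /
          (Real.sqrt (x + 1) * Real.sqrt (x - ζ) * Real.sqrt (x - lam) * Real.sqrt (x - 1))
        ≤ ((1 + r / (2 * δ₀)) * Real.sqrt (x - ζ + 0)) /
          (Real.sqrt (x + 1) * Real.sqrt (x - ζ) * Real.sqrt (x - lam) * Real.sqrt (x - 1)) := by
          gcongr
      _ = (1 + r / (2 * δ₀)) * (Real.sqrt (x - ζ + 0) /
          (Real.sqrt (x + 1) * Real.sqrt (x - ζ) * Real.sqrt (x - lam) * Real.sqrt (x - 1))) := by
          rw [mul_div_assoc]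
end

section
/- Fix δ₀ ∈ (0,1) and real numbers ζ, λ with −1+δ₀ ≤ ζ < λ ≤ 1−δ₀, and let r ≥ 0. With h_r, J(r) as below and F(y, r) = ∫₁^y h_r(x) dx for y ≥ 1, one has | F(y, r)/J(r) − F(y, 0)/J(0) | ≤ r/(2δ₀) for every y ≥ 1. (In particular the normalized Schwarz–Christoffel boundary parametrizations at parameters r and 0 differ by at most r/(2δ₀), which is the estimate g_t(x) = x + O(r(t)) of the paper.) -/
open MeasureTheory Real Set

lemma sqrt_aux (a d r : ℝ) (hd : 0 < d) (ha : d ≤ a) (hr : 0 ≤ r) :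
    Real.sqrt (a + r) ≤ (1 + r / (2 * d)) * Real.sqrt a := by
  have ha0 : 0 ≤ a := hd.le.trans ha
  have he0 : 0 ≤ r / (2 * d) := by positivity
  have h2 : r / (2 * d) * d = r / 2 := by field_simp
  have key : a + r ≤ (1 + r / (2 * d)) ^ 2 * a := by
    nlinarith [mul_le_mul_of_nonneg_left ha he0,
      mul_nonneg (mul_nonneg he0 he0) ha0]
  calc Real.sqrt (a + r) ≤ Real.sqrt ((1 + r / (2 * d)) ^ 2 * a) :=
        Real.sqrt_le_sqrt key
    _ = (1 + r / (2 * d)) * Real.sqrt a := by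
        rw [Real.sqrt_mul (by positivity), Real.sqrt_sq (by positivity)]

lemma integrableOn_majorant (lam δ₀ : ℝ) (hδ₀ : 0 < δ₀) (hlam : lam ≤ 1 - δ₀) :
    IntegrableOn (fun x : ℝ =>
      (Real.sqrt (x + 1) * Real.sqrt (x - lam) * Real.sqrt (x - 1))⁻¹)
      (Ioi 1) volume := by
  have hMmeas : Measurable fun x : ℝ =>
      (Real.sqrt (x + 1) * Real.sqrt (x - lam) * Real.sqrt (x - 1))⁻¹ := by
    fun_prop
  have hsplit : Ioi (1:ℝ) = Ioc 1 2 ∪ Ioi 2 := by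
    rw [Ioc_union_Ioi_eq_Ioi (by norm_num)]
  rw [hsplit]
  apply IntegrableOn.union
  · -- near 1 : dominate by (1/√δ₀) * (x-1)^(-1/2)
    have hig : IntegrableOn
        (fun x : ℝ => (1 / Real.sqrt δ₀) * (x - 1) ^ (-(1/2) : ℝ)) (Ioc 1 2) volume := by
      have h1 : IntervalIntegrable (fun x : ℝ => x ^ (-(1/2) : ℝ)) volume 0 1 :=
        intervalIntegral.intervalIntegrable_rpow' (by norm_num)
      have h2 : IntervalIntegrable (fun x : ℝ => (x - 1) ^ (-(1/2) : ℝ)) volume 1 2 := by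
        have h3 := h1.comp_sub_right 1
        norm_num at h3 ⊢
        exact h3
      exact ((intervalIntegrable_iff_integrableOn_Ioc_of_le
        (by norm_num : (1:ℝ) ≤ 2)).mp h2).const_mul _
    refine Integrable.mono hig (hMmeas.aestronglyMeasurable) ?_
    rw [ae_restrict_iff' measurableSet_Ioc]
    refine ae_of_all _ fun x hx => ?_
    obtain ⟨hx1, hx2⟩ := hx
    have hxl : 0 < x - lam := by linarith
    have hx1' : 0 < x - 1 := by linarith
    have hxp : 0 < x + 1 := by linarith
    have hs1 : (1:ℝ) ≤ Real.sqrt (x + 1) := by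
      have := Real.sqrt_le_sqrt (show (1:ℝ) ≤ x + 1 by linarith)
      rwa [Real.sqrt_one] at this
    have hs2 : Real.sqrt δ₀ ≤ Real.sqrt (x - lam) := Real.sqrt_le_sqrt (by linarith)
    have hrp : (x - 1) ^ (-(1/2) : ℝ) = (Real.sqrt (x - 1))⁻¹ := by
      rw [Real.rpow_neg hx1'.le, ← Real.sqrt_eq_rpow]
    have hb : (Real.sqrt (x + 1) * Real.sqrt (x - lam) * Real.sqrt (x - 1))⁻¹
        ≤ (1 / Real.sqrt δ₀) * (x - 1) ^ (-(1/2) : ℝ) := by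
      rw [hrp, one_div, ← mul_inv]
      apply inv_anti₀ (by positivity)
      have := mul_le_mul (mul_le_mul hs1 hs2 (by positivity) (by positivity))
        (le_refl (Real.sqrt (x - 1))) (Real.sqrt_nonneg _) (by positivity)
      calc Real.sqrt δ₀ * Real.sqrt (x - 1)
          = 1 * Real.sqrt δ₀ * Real.sqrt (x - 1) := by ring
        _ ≤ Real.sqrt (x + 1) * Real.sqrt (x - lam) * Real.sqrt (x - 1) := this
    rw [Real.norm_eq_abs, Real.norm_eq_abs, abs_of_nonneg (by positivity),
      abs_of_nonneg (by positivity)]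
    exact hb
  · -- near ∞ : dominate by 2 * x^(-3/2)
    have hig : IntegrableOn (fun x : ℝ => 2 * x ^ (-(3:ℝ)/2)) (Ioi 2) volume :=
      (integrableOn_Ioi_rpow_of_lt (by norm_num) (by norm_num : (0:ℝ) < 2)).const_mul 2
    refine Integrable.mono hig (hMmeas.aestronglyMeasurable) ?_
    rw [ae_restrict_iff' measurableSet_Ioi]
    refine ae_of_all _ fun x hx => ?_
    have hx2 : (2:ℝ) < x := hx
    have hx0 : (0:ℝ) < x := by linarith
    have hx1 : (0:ℝ) < x - 1 := by linarith
    have hxl : 0 < x - lam := by linarith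
    have h1 : Real.sqrt x ≤ Real.sqrt (x + 1) := Real.sqrt_le_sqrt (by linarith)
    have h2 : Real.sqrt (x - 1) ≤ Real.sqrt (x - lam) := Real.sqrt_le_sqrt (by linarith)
    have h3 : Real.sqrt (x - 1) * Real.sqrt (x - 1) = x - 1 :=
      Real.mul_self_sqrt hx1.le
    have hkey : x * Real.sqrt x ≤
        2 * (Real.sqrt (x + 1) * Real.sqrt (x - lam) * Real.sqrt (x - 1)) := by
      calc x * Real.sqrt x ≤ (2 * (x - 1)) * Real.sqrt x := by
            nlinarith [Real.sqrt_nonneg x]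
        _ = 2 * (Real.sqrt x * (Real.sqrt (x - 1) * Real.sqrt (x - 1))) := by
            rw [h3]; ring
        _ ≤ 2 * (Real.sqrt (x + 1) * (Real.sqrt (x - lam) * Real.sqrt (x - 1))) := by
            gcongr
        _ = 2 * (Real.sqrt (x + 1) * Real.sqrt (x - lam) * Real.sqrt (x - 1)) := by ring
    have hx32 : x ^ (-(3:ℝ)/2) = (x * Real.sqrt x)⁻¹ := by
      rw [show (-(3:ℝ)/2) = -(3/2) by norm_num, Real.rpow_neg hx0.le,
        show ((3:ℝ)/2) = 1 + 1/2 by norm_num, Real.rpow_add hx0, Real.rpow_one,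
        ← Real.sqrt_eq_rpow]
    have hb : (Real.sqrt (x + 1) * Real.sqrt (x - lam) * Real.sqrt (x - 1))⁻¹
        ≤ 2 * x ^ (-(3:ℝ)/2) := by
      rw [hx32]
      have hxs : 0 < x * Real.sqrt x := by positivity
      calc (Real.sqrt (x + 1) * Real.sqrt (x - lam) * Real.sqrt (x - 1))⁻¹
          ≤ (x * Real.sqrt x / 2)⁻¹ := by
            apply inv_anti₀ (by positivity); linarith
        _ = 2 * (x * Real.sqrt x)⁻¹ := by
            rw [inv_div, div_eq_mul_inv]
    rw [Real.norm_eq_abs, Real.norm_eq_abs, abs_of_nonneg (by positivity),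
      abs_of_nonneg (by positivity)]
    exact hb

/-- Comparison of the normalized Schwarz–Christoffel boundary parametrizations: with
`h_r(x) = √(x−ζ+r)/(√(x+1)·√(x−ζ)·√(x−λ)·√(x−1))`, `J(r) = ∫₁^∞ h_r` and
`F(y,r) = ∫₁^y h_r`, for every `y ≥ 1` one has
`|F(y,r)/J(r) − F(y,0)/J(0)| ≤ r/(2δ₀)`. -/
theorem stmt11 (δ₀ ζ lam r : ℝ) (hδ₀ : 0 < δ₀) (hδ₁ : δ₀ < 1)
    (hζ : -1 + δ₀ ≤ ζ) (hζlam : ζ < lam) (hlam : lam ≤ 1 - δ₀) (hr : 0 ≤ r)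
    (h : ℝ → ℝ → ℝ)
    (hdef : ∀ ρ x, h ρ x = Real.sqrt (x - ζ + ρ) /
      (Real.sqrt (x + 1) * Real.sqrt (x - ζ) * Real.sqrt (x - lam) *
        Real.sqrt (x - 1)))
    (J : ℝ → ℝ) (hJ : ∀ ρ, J ρ = ∫ x in Ioi (1 : ℝ), h ρ x)
    (F : ℝ → ℝ → ℝ) (hF : ∀ y ρ, F y ρ = ∫ x in (1 : ℝ)..y, h ρ x) :
    ∀ y : ℝ, 1 ≤ y → |F y r / J r - F y 0 / J 0| ≤ r / (2 * δ₀) := by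
  intro y hy
  set c : ℝ := r / (2 * δ₀) with hc
  have hc0 : 0 ≤ c := by positivity
  have hζ1 : ζ < 1 - δ₀ := lt_of_lt_of_le hζlam hlam
  set M : ℝ → ℝ := fun x =>
    (Real.sqrt (x + 1) * Real.sqrt (x - lam) * Real.sqrt (x - 1))⁻¹ with hM
  -- pointwise facts on Ioi 1
  have key : ∀ x ∈ Ioi (1:ℝ),
      h 0 x = M x ∧ 0 ≤ h 0 x ∧ h 0 x ≤ h r x ∧ h r x ≤ (1 + c) * h 0 x := by
    intro x hx
    have hx1 : (1:ℝ) < x := hx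
    have hp1 : 0 < x + 1 := by linarith
    have hpz : 0 < x - ζ := by linarith
    have hpl : 0 < x - lam := by linarith
    have hpo : 0 < x - 1 := by linarith
    have hsz : 0 < Real.sqrt (x - ζ) := Real.sqrt_pos.2 hpz
    have hB : 0 < Real.sqrt (x + 1) * Real.sqrt (x - lam) * Real.sqrt (x - 1) := by
      positivity
    have h0eq : h 0 x = M x := by
      rw [hdef, add_zero, hM]
      field_simp
    refine ⟨h0eq, ?_, ?_, ?_⟩
    · rw [hdef]; positivity
    · rw [hdef, hdef]
      gcongr
    · have hnum := sqrt_aux (x - ζ) δ₀ r hδ₀ (by linarith) hr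
      rw [hdef, hdef, add_zero, ← mul_div_assoc]
      gcongr
  have hmeas : ∀ ρ : ℝ, Measurable (h ρ) := by
    intro ρ
    have : h ρ = fun x => Real.sqrt (x - ζ + ρ) /
        (Real.sqrt (x + 1) * Real.sqrt (x - ζ) * Real.sqrt (x - lam) *
          Real.sqrt (x - 1)) := funext (hdef ρ)
    rw [this]; fun_prop
  -- integrability
  have hintM : IntegrableOn M (Ioi 1) volume := integrableOn_majorant lam δ₀ hδ₀ hlam
  have hint0 : IntegrableOn (h 0) (Ioi 1) volume :=
    hintM.congr_fun (fun x hx => ((key x hx).1).symm) measurableSet_Ioi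
  have hintr : IntegrableOn (h r) (Ioi 1) volume := by
    refine Integrable.mono (hint0.const_mul (1 + c)) (hmeas r).aestronglyMeasurable ?_
    rw [ae_restrict_iff' measurableSet_Ioi]
    refine ae_of_all _ fun x hx => ?_
    obtain ⟨h0M, h0nn, h0r, hrc⟩ := key x hx
    have hrnn : 0 ≤ h r x := h0nn.trans h0r
    rw [Real.norm_eq_abs, Real.norm_eq_abs, abs_of_nonneg hrnn,
      abs_of_nonneg (by nlinarith)]
    exact hrc
  have hsub : Ioc (1:ℝ) y ⊆ Ioi 1 := Ioc_subset_Ioi_self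
  have hint0y : IntegrableOn (h 0) (Ioc 1 y) volume := hint0.mono_set hsub
  have hintry : IntegrableOn (h r) (Ioc 1 y) volume := hintr.mono_set hsub
  -- rewrite F as set integrals
  have hFy : ∀ ρ, F y ρ = ∫ x in Ioc (1:ℝ) y, h ρ x := fun ρ => by
    rw [hF, intervalIntegral.integral_of_le hy]
  -- the six numeric facts
  have hA0nn : 0 ≤ F y 0 := by
    rw [hFy]
    exact setIntegral_nonneg measurableSet_Ioc fun x hx => (key x (hsub hx)).2.1
  have hA0Ar : F y 0 ≤ F y r := by
    rw [hFy, hFy]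
    exact setIntegral_mono_on hint0y hintry measurableSet_Ioc
      fun x hx => (key x (hsub hx)).2.2.1
  have hArle : F y r ≤ (1 + c) * F y 0 := by
    rw [hFy, hFy, ← integral_const_mul]
    exact setIntegral_mono_on hintry (hint0y.const_mul _) measurableSet_Ioc
      fun x hx => (key x (hsub hx)).2.2.2
  have hJ0Jr : J 0 ≤ J r := by
    rw [hJ, hJ]
    exact setIntegral_mono_on hint0 hintr measurableSet_Ioi
      fun x hx => (key x hx).2.2.1
  have hJrle : J r ≤ (1 + c) * J 0 := by
    rw [hJ, hJ, ← integral_const_mul]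
    exact setIntegral_mono_on hintr (hint0.const_mul _) measurableSet_Ioi
      fun x hx => (key x hx).2.2.2
  have hA0J0 : F y 0 ≤ J 0 := by
    rw [hFy, hJ]
    refine setIntegral_mono_set hint0 ?_ (HasSubset.Subset.eventuallyLE hsub)
    exact (ae_restrict_iff' measurableSet_Ioi).2
      (ae_of_all _ fun x hx => (key x hx).2.1)
  -- positivity of J 0
  have hJ0pos : 0 < J 0 := by
    have hlow : ∀ x ∈ Ioc (1:ℝ) 2, (1/3 : ℝ) ≤ h 0 x := by
      intro x hx
      obtain ⟨hx1, hx2⟩ := hx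
      have hpz : 0 < x - ζ := by linarith
      have hsz : 0 < Real.sqrt (x - ζ) := Real.sqrt_pos.2 hpz
      have hb1 : Real.sqrt (x + 1) ≤ Real.sqrt 3 := Real.sqrt_le_sqrt (by linarith)
      have hb2 : Real.sqrt (x - lam) ≤ Real.sqrt 3 := Real.sqrt_le_sqrt (by linarith)
      have hb3 : Real.sqrt (x - 1) ≤ 1 := by
        have := Real.sqrt_le_sqrt (show x - 1 ≤ 1 by linarith)
        rwa [Real.sqrt_one] at this
      have h33 : Real.sqrt 3 * Real.sqrt 3 = 3 := Real.mul_self_sqrt (by norm_num)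
      have hD : 0 < Real.sqrt (x + 1) * Real.sqrt (x - ζ) * Real.sqrt (x - lam) *
          Real.sqrt (x - 1) :=
        mul_pos (mul_pos (mul_pos (Real.sqrt_pos.2 (by linarith)) hsz)
          (Real.sqrt_pos.2 (by linarith))) (Real.sqrt_pos.2 (by linarith))
      rw [hdef, add_zero, le_div_iff₀ hD]
      have hDle : Real.sqrt (x + 1) * Real.sqrt (x - ζ) * Real.sqrt (x - lam) *
          Real.sqrt (x - 1) ≤ Real.sqrt 3 * Real.sqrt (x - ζ) * Real.sqrt 3 * 1 := by
        gcongr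
      have : Real.sqrt 3 * Real.sqrt (x - ζ) * Real.sqrt 3 * 1 = 3 * Real.sqrt (x - ζ) := by
        rw [show Real.sqrt 3 * Real.sqrt (x - ζ) * Real.sqrt 3 * 1
          = (Real.sqrt 3 * Real.sqrt 3) * Real.sqrt (x - ζ) by ring, h33]
      linarith
    have hconst : IntegrableOn (fun _ : ℝ => (1/3 : ℝ)) (Ioc 1 2) volume :=
      integrableOn_const (by simp [Real.volume_Ioc])
    have h1 : (1/3 : ℝ) ≤ ∫ x in Ioc (1:ℝ) 2, h 0 x := by
      have := setIntegral_mono_on hconst (hint0.mono_set Ioc_subset_Ioi_self)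
        measurableSet_Ioc hlow
      rwa [setIntegral_const, measureReal_def, Real.volume_Ioc, show (2:ℝ) - 1 = 1 by norm_num,
        ENNReal.toReal_ofReal (by norm_num), one_smul] at this
    have h2 : ∫ x in Ioc (1:ℝ) 2, h 0 x ≤ J 0 := by
      rw [hJ]
      refine setIntegral_mono_set hint0 ?_
        (HasSubset.Subset.eventuallyLE Ioc_subset_Ioi_self)
      exact (ae_restrict_iff' measurableSet_Ioi).2
        (ae_of_all _ fun x hx => (key x hx).2.1)
    linarith
  -- final algebra
  have hJrpos : 0 < J r := lt_of_lt_of_le hJ0pos hJ0Jr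
  rw [div_sub_div _ _ hJrpos.ne' hJ0pos.ne', abs_div,
    abs_of_pos (mul_pos hJrpos hJ0pos), div_le_iff₀ (mul_pos hJrpos hJ0pos)]
  have p1 : F y r * J 0 ≤ (1 + c) * F y 0 * J 0 :=
    mul_le_mul_of_nonneg_right hArle hJ0pos.le
  have p2 : J 0 * F y 0 ≤ J r * F y 0 := mul_le_mul_of_nonneg_right hJ0Jr hA0nn
  have p3 : F y 0 * (c * J 0) ≤ J r * (c * J 0) :=
    mul_le_mul_of_nonneg_right (hA0J0.trans hJ0Jr) (mul_nonneg hc0 hJ0pos.le)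
  have p4 : J r * F y 0 ≤ (1 + c) * J 0 * F y 0 := mul_le_mul_of_nonneg_right hJrle hA0nn
  have p5 : F y 0 * J 0 ≤ F y r * J 0 := mul_le_mul_of_nonneg_right hA0Ar hJ0pos.le
  rw [abs_le]
  constructor <;> nlinarith [p1, p2, p3, p4, p5]
end
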